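/- Let f ∈ F₁(a,b) and let Q, P be probability measures on a measurable space (Ω,M). Then D_f(Q‖P) = sup over g ∈ M_b(Ω) of {E_Q[g] − E_P[f*(g)]}, and also D_f(Q‖P) = sup over g ∈ M_b(Ω) of {E_Q[g] − Λ_f^P[g]}. -/

import Mathlib

open MeasureTheory Filter Set Topology ENNReal
open scoped Classical

noncomputable section

/-- The set of bounded measurable real-valued functions on `Ω`. -/
def Mb (Ω : Type*) [MeasurableSpace Ω] : Set (Ω → ℝ) :=
  {g | Measurable g ∧ ∃ C : ℝ, ∀ x, |g x| ≤ C}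

/-- The set of bounded continuous real-valued functions on `S`. -/
def Cb (S : Type*) [TopologicalSpace S] : Set (S → ℝ) :=
  {g | Continuous g ∧ ∃ C : ℝ, ∀ x, |g x| ≤ C}

/-- The positive part of an extended real number, as an element of `ℝ≥0∞`. -/
def posE (x : EReal) : ℝ≥0∞ := if x = ⊤ then ⊤ else ENNReal.ofReal x.toReal

/-- The extended-real-valued integral of an `EReal`-valued function, defined as the
difference of the lower integrals of the positive and negative parts, with the
convention `∞ - ∞ = -∞`. -/
def eIntegral {Ω : Type*} [MeasurableSpace Ω] (P : Measure Ω) (h : Ω → EReal) : EReal :=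
  ((∫⁻ x, posE (h x) ∂P : ℝ≥0∞) : EReal) - ((∫⁻ x, posE (-(h x)) ∂P : ℝ≥0∞) : EReal)

/-- The Legendre transform `f*(y) = sup_x {x*y - f(x)}` of `f : ℝ → (-∞,∞]`. -/
def fstar (f : ℝ → EReal) (y : ℝ) : EReal := ⨆ x : ℝ, (((x * y : ℝ) : EReal) - f x)

/-- `f : ℝ → (-∞,∞]` is (the convex LSC extension of) an element of `F₁(a,b)`:
convex, lower semicontinuous, never `-∞`, finite exactly on the interval `(a,b)`
(with `+∞` strictly outside `[a,b]`), and `f(1) = 0` with `a < 1 < b`. -/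
structure IsF1 (a b : EReal) (f : ℝ → EReal) : Prop where
  a_lt_one : a < ((1 : ℝ) : EReal)
  one_lt_b : ((1 : ℝ) : EReal) < b
  convex : ∀ x y t : ℝ, 0 < t → t < 1 →
    f (t * x + (1 - t) * y) ≤ ((t : ℝ) : EReal) * f x + (((1 - t : ℝ)) : EReal) * f y
  lsc : LowerSemicontinuous f
  ne_bot : ∀ x, f x ≠ ⊥
  finite_on : ∀ x : ℝ, a < (x : EReal) → (x : EReal) < b → f x ≠ ⊤
  top_outside : ∀ x : ℝ, ((x : EReal) < a ∨ b < (x : EReal)) → f x = ⊤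
  at_one : f 1 = 0

/-- `Λ_f^P[g] = inf_{ν ∈ ℝ} {ν + E_P[f*(g - ν)]}`. -/
def LambdaF {Ω : Type*} [MeasurableSpace Ω] (f : ℝ → EReal) (P : Measure Ω) (g : Ω → ℝ) :
    EReal :=
  ⨅ ν : ℝ, ((ν : EReal) + eIntegral P (fun x => fstar f (g x - ν)))

/-- The classical `f`-divergence `D_f(Q‖P) = E_P[f(dQ/dP)]` if `Q ≪ P`, else `∞`. -/
def fDivE {Ω : Type*} [MeasurableSpace Ω] (f : ℝ → EReal) (Q P : Measure Ω) : EReal :=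
  if Q ≪ P then eIntegral P (fun x => f ((Q.rnDeriv P x).toReal)) else ⊤

/-- The `(f,Γ)`-divergence `D_f^Γ(Q‖P) = sup_{g ∈ Γ} {E_Q[g] - Λ_f^P[g]}`. -/
def fGammaDiv {Ω : Type*} [MeasurableSpace Ω] (f : ℝ → EReal) (Γ : Set (Ω → ℝ))
    (Q P : Measure Ω) : EReal :=
  ⨆ g ∈ Γ, (((∫ x, g x ∂Q : ℝ) : EReal) - LambdaF f P g)

/-- The `Γ`-IPM `W^Γ(Q,P) = sup_{g ∈ Γ} {E_Q[g] - E_P[g]}`. -/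
def ipmW {Ω : Type*} [MeasurableSpace Ω] (Γ : Set (Ω → ℝ)) (Q P : Measure Ω) : EReal :=
  ⨆ g ∈ Γ, (((∫ x, g x ∂Q : ℝ) : EReal) - ((∫ x, g x ∂P : ℝ) : EReal))

end


section Helpers

variable {Ω : Type*} [MeasurableSpace Ω] {P : Measure Ω}

lemma ereal_coe_toReal_enn {x : ℝ≥0∞} (hx : x ≠ ⊤) : ((x.toReal : ℝ) : EReal) = (x : EReal) := by
  lift x to NNReal using hx
  rw [EReal.coe_nnreal_eq_coe_real]
  simp

lemma ereal_eq_top_of_forall_coe_le {x : EReal} (h : ∀ c : ℝ, (c : EReal) ≤ x) : x = ⊤ := by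
  by_contra hx
  rcases eq_or_ne x ⊥ with rfl | hb
  · exact absurd (h 0) (by simp)
  · have h2 : ((x.toReal + 1 : ℝ) : EReal) ≤ (x.toReal : EReal) := by
      rw [EReal.coe_toReal hx hb]; exact h _
    rw [EReal.coe_le_coe_iff] at h2
    linarith

lemma ereal_le_of_forall_real_lt {x y : EReal} (h : ∀ z : ℝ, (z : EReal) < y → (z : EReal) ≤ x) :
    y ≤ x := by
  rcases eq_or_ne y ⊥ with rfl | hyb
  · exact bot_le
  rcases eq_or_ne y ⊤ with rfl | hyt
  · have : x = ⊤ := ereal_eq_top_of_forall_coe_le (fun c => h c (EReal.coe_lt_top c))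
    simp [this]
  by_contra hlt
  push_neg at hlt
  rcases EReal.lt_iff_exists_real_btwn.1 hlt with ⟨w, hxw, hwy⟩
  exact absurd hxw (not_lt.2 (h w hwy))

lemma ereal_coe_le_of_forall_sub {c : ℝ} {x : EReal}
    (h : ∀ ε : ℝ, 0 < ε → ((c - ε : ℝ) : EReal) ≤ x) : (c : EReal) ≤ x := by
  apply ereal_le_of_forall_real_lt
  intro z hz
  rw [EReal.coe_lt_coe_iff] at hz
  have := h (c - z) (by linarith)
  simpa using this

lemma ereal_real_sub_add (r ν : ℝ) (e : EReal) :
    (r : EReal) - ((ν : EReal) + e) = ((r - ν : ℝ) : EReal) - e := by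
  induction e with
  | bot =>
      rw [EReal.add_bot, EReal.sub_bot (EReal.coe_ne_bot r), EReal.sub_bot (EReal.coe_ne_bot (r - ν))]
  | coe e => norm_cast; ring
  | top =>
      rw [EReal.add_top_of_ne_bot (EReal.coe_ne_bot ν), EReal.sub_top, EReal.sub_top]

lemma ereal_add_coe_iSup {ι : Sort*} [Nonempty ι] (r : ℝ) (s : ι → EReal) :
    (r : EReal) + ⨆ i, s i = ⨆ i, ((r : EReal) + s i) := by
  apply le_antisymm
  · rcases eq_or_ne (⨆ i, s i) ⊥ with hb | hb
    · have : ∀ i, s i = ⊥ := fun i => le_bot_iff.1 (hb ▸ le_iSup s i)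
      have h2 : ∀ i, (r : EReal) + s i = ⊥ := fun i => by rw [this i, EReal.add_bot]
      simp [hb, h2, EReal.add_bot]
    rcases eq_or_ne (⨆ i, s i) ⊤ with ht | ht
    · rw [ht, EReal.add_top_of_ne_bot (EReal.coe_ne_bot r)]
      apply (ereal_eq_top_of_forall_coe_le (fun c => ?_)).ge
      have : ((c - r : ℝ) : EReal) < ⨆ i, s i := ht ▸ EReal.coe_lt_top _
      rcases lt_iSup_iff.1 this with ⟨i, hi⟩
      calc ((c : ℝ) : EReal) = (r : EReal) + ((c - r : ℝ) : EReal) := by norm_cast; ring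
        _ ≤ (r : EReal) + s i := add_le_add_right hi.le _
        _ ≤ ⨆ i, ((r : EReal) + s i) := le_iSup (fun i => (r : EReal) + s i) i
    · set m := ⨆ i, s i with hm
      rw [← EReal.coe_toReal ht hb, ← EReal.coe_add]
      apply ereal_coe_le_of_forall_sub
      intro ε hε
      have : ((m.toReal - ε : ℝ) : EReal) < m := by
        conv_rhs => rw [← EReal.coe_toReal ht hb]
        exact_mod_cast sub_lt_self _ hε
      rcases lt_iSup_iff.1 this with ⟨i, hi⟩
      calc ((r + m.toReal - ε : ℝ) : EReal) = (r : EReal) + ((m.toReal - ε : ℝ) : EReal) := by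
            norm_cast; ring
        _ ≤ (r : EReal) + s i := add_le_add_right hi.le _
        _ ≤ _ := le_iSup (fun i => (r : EReal) + s i) i
  · exact iSup_le fun i => add_le_add_right (le_iSup s i) _

lemma ereal_coe_ennreal_iSup {ι : Sort*} [Nonempty ι] (s : ι → ℝ≥0∞) :
    ((⨆ i, s i : ℝ≥0∞) : EReal) = ⨆ i, ((s i : ℝ≥0∞) : EReal) := by
  apply le_antisymm
  · rcases eq_or_ne (⨆ i, s i) ⊤ with ht | ht
    · rw [ht, EReal.coe_ennreal_top]
      apply (ereal_eq_top_of_forall_coe_le (fun c => ?_)).ge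
      rcases le_or_gt (c : EReal) 0 with hc | hc
      · exact le_trans hc (le_trans (EReal.coe_ennreal_nonneg _)
          (le_iSup (fun i => ((s i : ℝ≥0∞) : EReal)) (Classical.arbitrary ι)))
      have hc0 : (0:ℝ) < c := by exact_mod_cast hc
      have h2 : ENNReal.ofReal c < ⨆ i, s i := ht ▸ ENNReal.ofReal_lt_top
      rcases lt_iSup_iff.1 h2 with ⟨i, hi⟩
      calc (c : EReal) = ((ENNReal.ofReal c : ℝ≥0∞) : EReal) := by
            rw [← ereal_coe_toReal_enn ENNReal.ofReal_ne_top, ENNReal.toReal_ofReal hc0.le]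
        _ ≤ ((s i : ℝ≥0∞) : EReal) := EReal.coe_ennreal_le_coe_ennreal_iff.2 hi.le
        _ ≤ _ := le_iSup (fun i => ((s i : ℝ≥0∞) : EReal)) i
    · rw [← ereal_coe_toReal_enn ht]
      apply ereal_coe_le_of_forall_sub
      intro ε hε
      rcases eq_or_ne (⨆ i, s i) 0 with h0 | h0
      · have : (0:ℝ) ≤ ε := hε.le
        calc (((⨆ i, s i).toReal - ε : ℝ) : EReal) ≤ ((0:ℝ) : EReal) := by
              rw [h0]; exact_mod_cast by simp [this]
          _ ≤ ((s (Classical.arbitrary ι) : ℝ≥0∞) : EReal) := by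
              exact EReal.coe_ennreal_nonneg _
          _ ≤ _ := le_iSup (fun i => ((s i : ℝ≥0∞) : EReal)) (Classical.arbitrary ι)
      have h1 : (⨆ i, s i) - ENNReal.ofReal ε < ⨆ i, s i :=
        ENNReal.sub_lt_self ht h0 (by simpa using hε)
      rcases lt_iSup_iff.1 h1 with ⟨i, hi⟩
      have hsit : s i ≠ ⊤ := fun h => ht (top_unique (h ▸ le_iSup s i))
      have h3 : (⨆ i, s i).toReal - ε ≤ (s i).toReal := by
        have h4 : (⨆ i, s i) ≤ s i + ENNReal.ofReal ε := by
          rw [← tsub_le_iff_right] at *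
          exact hi.le
        have h5 := ENNReal.toReal_mono (by
          exact ENNReal.add_ne_top.2 ⟨hsit, ENNReal.ofReal_ne_top⟩) h4
        rw [ENNReal.toReal_add hsit ENNReal.ofReal_ne_top, ENNReal.toReal_ofReal hε.le] at h5
        linarith
      calc (((⨆ i, s i).toReal - ε : ℝ) : EReal) ≤ (((s i).toReal : ℝ) : EReal) := by
            exact_mod_cast h3
        _ = ((s i : ℝ≥0∞) : EReal) := ereal_coe_toReal_enn hsit
        _ ≤ _ := le_iSup (fun i => ((s i : ℝ≥0∞) : EReal)) i
  · exact iSup_le fun i => EReal.coe_ennreal_le_coe_ennreal_iff.2 (le_iSup s i)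

end Helpers

section PosE


lemma posE_top : posE ⊤ = ⊤ := if_pos rfl
lemma posE_bot : posE ⊥ = 0 := by simp [posE]
lemma posE_coe (r : ℝ) : posE (r : EReal) = ENNReal.ofReal r := by simp [posE]

lemma posE_mono {x y : EReal} (h : x ≤ y) : posE x ≤ posE y := by
  rcases eq_or_ne y ⊤ with rfl | hy
  · exact le_top.trans_eq posE_top.symm
  have hx : x ≠ ⊤ := fun hx => hy (top_unique (hx ▸ h))
  rcases eq_or_ne x ⊥ with rfl | hxb
  · simp [posE, hy]
  rw [posE, posE, if_neg hx, if_neg hy]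
  rcases eq_or_ne y ⊥ with rfl | hyb
  · rw [le_bot_iff] at h; exact absurd h hxb
  exact ENNReal.ofReal_le_ofReal (EReal.toReal_le_toReal h hxb hy)

lemma measurable_posE : Measurable posE := by
  have : posE = fun x : EReal => if x ∈ ({⊤} : Set EReal) then (⊤:ℝ≥0∞) else ENNReal.ofReal x.toReal := by
    funext x; simp [posE]
  rw [this]
  exact Measurable.ite (measurableSet_singleton _) measurable_const
    (ENNReal.measurable_ofReal.comp measurable_ereal_toReal)

end PosE

section EIntegral
variable {Ω : Type*} [MeasurableSpace Ω] {P : Measure Ω}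

lemma eIntegral_congr_ae {h g : Ω → EReal} (hfg : h =ᵐ[P] g) : eIntegral P h = eIntegral P g := by
  unfold eIntegral
  have e1 : (∫⁻ x, posE (h x) ∂P) = ∫⁻ x, posE (g x) ∂P :=
    lintegral_congr_ae (hfg.mono fun x hx => by simp only [hx])
  have e2 : (∫⁻ x, posE (-h x) ∂P) = ∫⁻ x, posE (-g x) ∂P :=
    lintegral_congr_ae (hfg.mono fun x hx => by simp only [hx])
  rw [e1, e2]

lemma eIntegral_mono_ae {h g : Ω → EReal} (hfg : ∀ᵐ x ∂P, h x ≤ g x) :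
    eIntegral P h ≤ eIntegral P g := by
  unfold eIntegral
  apply EReal.sub_le_sub
  · exact EReal.coe_ennreal_le_coe_ennreal_iff.2
      (lintegral_mono_ae (hfg.mono fun x hx => posE_mono hx))
  · exact EReal.coe_ennreal_le_coe_ennreal_iff.2
      (lintegral_mono_ae (hfg.mono fun x hx => posE_mono (EReal.neg_le_neg_iff.2 hx)))

lemma lintegral_ofReal_lt_top {u : Ω → ℝ} (hu : Integrable u P) :
    (∫⁻ x, ENNReal.ofReal (u x) ∂P) < ⊤ :=
  lt_of_le_of_lt (lintegral_mono fun x => Real.ofReal_le_enorm _) hu.2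

lemma eIntegral_real {u : Ω → ℝ} (hu : Integrable u P) :
    eIntegral P (fun x => (u x : EReal)) = ((∫ x, u x ∂P : ℝ) : EReal) := by
  unfold eIntegral
  have h1 : ∀ x, posE ((u x : ℝ) : EReal) = ENNReal.ofReal (u x) := fun x => posE_coe _
  have h2 : ∀ x, posE (-((u x : ℝ) : EReal)) = ENNReal.ofReal (-u x) := fun x => by
    rw [← EReal.coe_neg, posE_coe]
  simp only [h1, h2]
  have f1 : (∫⁻ x, ENNReal.ofReal (u x) ∂P) ≠ ⊤ := (lintegral_ofReal_lt_top hu).ne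
  have f2 : (∫⁻ x, ENNReal.ofReal (-u x) ∂P) ≠ ⊤ := (lintegral_ofReal_lt_top hu.neg).ne
  rw [← ereal_coe_toReal_enn f1, ← ereal_coe_toReal_enn f2, ← EReal.coe_sub,
    integral_eq_lintegral_pos_part_sub_lintegral_neg_part hu]

lemma eIntegral_const_real [IsProbabilityMeasure P] (r : ℝ) :
    eIntegral P (fun _ => (r : EReal)) = (r : EReal) := by
  rw [eIntegral_real (integrable_const r)]
  simp

lemma ofReal_tri {v l : ℝ} (h : l ≤ v) :
    ENNReal.ofReal (v - l) + ENNReal.ofReal (-v) + ENNReal.ofReal l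
      = ENNReal.ofReal v + ENNReal.ofReal (-l) := by
  rcases le_total 0 v with hv | hv <;> rcases le_total 0 l with hl | hl
  · rw [ENNReal.ofReal_eq_zero.2 (by linarith : -v ≤ 0), ENNReal.ofReal_eq_zero.2 (by linarith : -l ≤ 0),
      add_zero, add_zero, ← ENNReal.ofReal_add (by linarith) hl]
    ring_nf
  · rw [ENNReal.ofReal_eq_zero.2 (by linarith : -v ≤ 0), ENNReal.ofReal_eq_zero.2 hl,
      add_zero, add_zero, ← ENNReal.ofReal_add hv (by linarith)]
    ring_nf
  · have hv0 : v = 0 := le_antisymm hv (hl.trans h)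
    have hl0 : l = 0 := le_antisymm (h.trans hv) hl
    subst hv0; subst hl0; simp
  · rw [ENNReal.ofReal_eq_zero.2 hv, ENNReal.ofReal_eq_zero.2 hl, add_zero, zero_add,
      ← ENNReal.ofReal_add (by linarith) (by linarith)]
    ring_nf

lemma eIntegral_eq_add {h : Ω → EReal} (hh : Measurable h) {l : Ω → ℝ}
    (hlm : Measurable l) (hli : Integrable l P) (hle : ∀ x, ((l x : ℝ) : EReal) ≤ h x) :
    eIntegral P h = ((∫ x, l x ∂P : ℝ) : EReal)
      + ((∫⁻ x, posE (h x - ((l x : ℝ) : EReal)) ∂P : ℝ≥0∞) : EReal) := by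
  have hnb : ∀ x, h x ≠ ⊥ := fun x hx => by
    have := hle x; rw [hx, le_bot_iff] at this; exact EReal.coe_ne_bot _ this
  -- rewrite K
  have hK : ∀ x, posE (h x - ((l x : ℝ) : EReal))
      = if h x = ⊤ then (⊤:ℝ≥0∞) else ENNReal.ofReal ((h x).toReal - l x) := by
    intro x
    rcases eq_or_ne (h x) ⊤ with hx | hx
    · rw [hx, EReal.top_sub_coe, if_pos rfl, posE_top]
    · rw [if_neg hx]
      have hrepr : h x = (((h x).toReal : ℝ) : EReal) := (EReal.coe_toReal hx (hnb x)).symm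
      calc posE (h x - ((l x : ℝ) : EReal))
          = posE ((((h x).toReal - l x : ℝ)) : EReal) := by
            conv_lhs => rw [hrepr]
            rw [← EReal.coe_sub]
        _ = ENNReal.ofReal ((h x).toReal - l x) := posE_coe _
  have hKm : Measurable fun x => posE (h x - ((l x : ℝ) : EReal)) := by
    simp only [hK]
    refine Measurable.ite (hh (measurableSet_singleton ⊤)) measurable_const ?_
    exact ENNReal.measurable_ofReal.comp ((hh.ereal_toReal).sub hlm)
  have hHpm : Measurable fun x => posE (h x) := measurable_posE.comp hh
  have hHnm : Measurable fun x => posE (-h x) := measurable_posE.comp hh.neg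
  have hLpm : Measurable fun x => ENNReal.ofReal (l x) := ENNReal.measurable_ofReal.comp hlm
  have hLnm : Measurable fun x => ENNReal.ofReal (-l x) := ENNReal.measurable_ofReal.comp hlm.neg
  -- pointwise identity
  have hpt : ∀ x, posE (h x - ((l x : ℝ) : EReal)) + posE (-h x) + ENNReal.ofReal (l x)
      = posE (h x) + ENNReal.ofReal (-l x) := by
    intro x
    rcases eq_or_ne (h x) ⊤ with hx | hx
    · rw [hx, EReal.top_sub_coe, posE_top, EReal.neg_top, posE_bot]
      simp
    · have hrepr : h x = (((h x).toReal : ℝ) : EReal) := (EReal.coe_toReal hx (hnb x)).symm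
      have hlv : l x ≤ (h x).toReal := by
        rw [← EReal.coe_le_coe_iff, ← hrepr]; exact hle x
      have h1 : posE (h x - ((l x : ℝ) : EReal)) = ENNReal.ofReal ((h x).toReal - l x) := by
        rw [hK x, if_neg hx]
      have h2 : posE (h x) = ENNReal.ofReal ((h x).toReal) := by
        conv_lhs => rw [hrepr]
        exact posE_coe _
      have h3 : posE (-h x) = ENNReal.ofReal (-(h x).toReal) := by
        conv_lhs => rw [hrepr, ← EReal.coe_neg]
        exact posE_coe _
      rw [h1, h2, h3]
      exact ofReal_tri hlv
  -- integrate
  have hint : (∫⁻ x, posE (h x - ((l x : ℝ) : EReal)) ∂P) + (∫⁻ x, posE (-h x) ∂P)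
      + (∫⁻ x, ENNReal.ofReal (l x) ∂P)
      = (∫⁻ x, posE (h x) ∂P) + (∫⁻ x, ENNReal.ofReal (-l x) ∂P) := by
    rw [← lintegral_add_left hKm, ← lintegral_add_left (hKm.fun_add hHnm),
      ← lintegral_add_left hHpm]
    exact lintegral_congr fun x => hpt x
  set EK := ∫⁻ x, posE (h x - ((l x : ℝ) : EReal)) ∂P
  set EHp := ∫⁻ x, posE (h x) ∂P
  set EHn := ∫⁻ x, posE (-h x) ∂P
  set ELp := ∫⁻ x, ENNReal.ofReal (l x) ∂P
  set ELn := ∫⁻ x, ENNReal.ofReal (-l x) ∂P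
  have fLp : ELp ≠ ⊤ := (lintegral_ofReal_lt_top hli).ne
  have fLn : ELn ≠ ⊤ := (lintegral_ofReal_lt_top hli.neg).ne
  have fHn : EHn ≠ ⊤ := by
    have : EHn ≤ ELn := lintegral_mono fun x => by
      have : -h x ≤ -((l x : ℝ) : EReal) := EReal.neg_le_neg_iff.2 (hle x)
      calc posE (-h x) ≤ posE (-((l x : ℝ) : EReal)) := posE_mono this
        _ = ENNReal.ofReal (-l x) := by rw [← EReal.coe_neg, posE_coe]
    exact (this.trans_lt (lt_top_iff_ne_top.2 fLn)).ne
  have hIl : ∫ x, l x ∂P = ELp.toReal - ELn.toReal :=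
    integral_eq_lintegral_pos_part_sub_lintegral_neg_part hli
  show (EHp : EReal) - (EHn : EReal) = _
  rcases eq_or_ne EK ⊤ with hK1 | hK1
  · have hEHp : EHp = ⊤ := by
      by_contra hne
      have h5 : EHp + ELn ≠ ⊤ := ENNReal.add_ne_top.2 ⟨hne, fLn⟩
      rw [← hint, hK1] at h5
      simp at h5
    rw [hEHp, hK1, EReal.coe_ennreal_top, ← ereal_coe_toReal_enn fHn, EReal.top_sub_coe,
      EReal.add_top_of_ne_bot (EReal.coe_ne_bot _)]
  · have fHp : EHp ≠ ⊤ := by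
      intro hne
      have h5 : EK + EHn + ELp = ⊤ := by rw [hint, hne, top_add]
      exact absurd h5 (ENNReal.add_ne_top.2 ⟨ENNReal.add_ne_top.2 ⟨hK1, fHn⟩, fLp⟩)
    have htr := congrArg ENNReal.toReal hint
    rw [ENNReal.toReal_add (ENNReal.add_ne_top.2 ⟨hK1, fHn⟩) fLp,
      ENNReal.toReal_add hK1 fHn, ENNReal.toReal_add fHp fLn] at htr
    rw [← ereal_coe_toReal_enn fHp, ← ereal_coe_toReal_enn fHn, ← ereal_coe_toReal_enn hK1,
      ← EReal.coe_sub, ← EReal.coe_add, hIl]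
    rw [EReal.coe_eq_coe_iff]
    linarith

end EIntegral

section MonoConv
variable {Ω : Type*} [MeasurableSpace Ω] {P : Measure Ω}

lemma sup_ofReal_eq_posE {u : ℕ → ℝ} {H : EReal} (hle : ∀ n, ((u n : ℝ) : EReal) ≤ H)
    (hsup : (⨆ n, ((u n : ℝ) : EReal)) = H) (c : ℝ) (hc : ((c : ℝ) : EReal) ≤ H) :
    (⨆ n, ENNReal.ofReal (u n - c)) = posE (H - (c : EReal)) := by
  apply le_antisymm
  · apply iSup_le
    intro n
    have h1 : (((u n - c : ℝ)) : EReal) ≤ H - (c : EReal) := by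
      rw [EReal.coe_sub]
      exact EReal.sub_le_sub (hle n) le_rfl
    calc ENNReal.ofReal (u n - c) = posE (((u n - c : ℝ)) : EReal) := (posE_coe _).symm
      _ ≤ posE (H - (c : EReal)) := posE_mono h1
  · rcases eq_or_ne H ⊤ with rfl | hH
    · rw [EReal.top_sub_coe, posE_top]
      rw [top_le_iff]
      apply ENNReal.eq_top_of_forall_nnreal_le
      intro r
      have : ((r + c : ℝ) : EReal) < ⨆ n, ((u n : ℝ) : EReal) := by
        rw [hsup]; exact EReal.coe_lt_top _
      rcases lt_iSup_iff.1 this with ⟨n, hn⟩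
      rw [EReal.coe_lt_coe_iff] at hn
      calc (r : ℝ≥0∞) = ENNReal.ofReal (r : ℝ) := (ENNReal.ofReal_coe_nnreal).symm
        _ ≤ ENNReal.ofReal (u n - c) := ENNReal.ofReal_le_ofReal (by linarith)
        _ ≤ _ := le_iSup (fun n => ENNReal.ofReal (u n - c)) n
    · have hHb : H ≠ ⊥ := fun hb => by
        rw [hb, le_bot_iff] at hc
        exact EReal.coe_ne_bot c hc
      have hrepr : H = ((H.toReal : ℝ) : EReal) := (EReal.coe_toReal hH hHb).symm
      have h2 : posE (H - (c : EReal)) = ENNReal.ofReal (H.toReal - c) := by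
        conv_lhs => rw [hrepr, ← EReal.coe_sub]
        exact posE_coe _
      rw [h2]
      apply ENNReal.le_of_forall_pos_le_add
      intro ε hε _
      have : ((H.toReal - ε : ℝ) : EReal) < ⨆ n, ((u n : ℝ) : EReal) := by
        rw [hsup]
        conv_rhs => rw [hrepr]
        exact_mod_cast sub_lt_self _ (by exact_mod_cast hε)
      rcases lt_iSup_iff.1 this with ⟨n, hn⟩
      rw [EReal.coe_lt_coe_iff] at hn
      calc ENNReal.ofReal (H.toReal - c) ≤ ENNReal.ofReal ((u n - c) + ε) :=
            ENNReal.ofReal_le_ofReal (by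
              have hε' : (0:ℝ) ≤ ε := by exact_mod_cast hε.le
              linarith)
        _ ≤ ENNReal.ofReal (u n - c) + ENNReal.ofReal (ε : ℝ) := ENNReal.ofReal_add_le
        _ ≤ (⨆ n, ENNReal.ofReal (u n - c)) + (ε : ℝ≥0∞) := by
            apply add_le_add (le_iSup (fun n => ENNReal.ofReal (u n - c)) n)
            rw [ENNReal.ofReal_coe_nnreal]

lemma iSup_integral_eq_eIntegral {h : Ω → EReal} (hh : Measurable h) {u : ℕ → Ω → ℝ}
    (hum : ∀ n, Measurable (u n)) (hui : ∀ n, Integrable (u n) P)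
    (hmono : ∀ n x, u n x ≤ u (n + 1) x)
    (hsup : ∀ x, (⨆ n, ((u n x : ℝ) : EReal)) = h x) :
    (⨆ n, ((∫ x, u n x ∂P : ℝ) : EReal)) = eIntegral P h := by
  have hle : ∀ n x, ((u n x : ℝ) : EReal) ≤ h x := fun n x =>
    (hsup x) ▸ le_iSup (fun n => ((u n x : ℝ) : EReal)) n
  have hmono' : ∀ x, Monotone fun n => u n x := fun x =>
    monotone_nat_of_le_succ (fun n => hmono n x)
  have key : eIntegral P h = ((∫ x, u 0 x ∂P : ℝ) : EReal)
      + ((∫⁻ x, posE (h x - ((u 0 x : ℝ) : EReal)) ∂P : ℝ≥0∞) : EReal) :=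
    eIntegral_eq_add hh (hum 0) (hui 0) (hle 0)
  have step : ∀ n, ((∫ x, u n x ∂P : ℝ) : EReal) = ((∫ x, u 0 x ∂P : ℝ) : EReal)
      + ((∫⁻ x, ENNReal.ofReal (u n x - u 0 x) ∂P : ℝ≥0∞) : EReal) := by
    intro n
    have hw : Integrable (fun x => u n x - u 0 x) P := (hui n).sub (hui 0)
    have hwnn : ∀ x, 0 ≤ u n x - u 0 x := fun x => sub_nonneg.2 (hmono' x (Nat.zero_le n))
    have h4 : ∫ x, (u n x - u 0 x) ∂P = (∫⁻ x, ENNReal.ofReal (u n x - u 0 x) ∂P).toReal :=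
      integral_eq_lintegral_of_nonneg_ae (ae_of_all _ hwnn) hw.aestronglyMeasurable
    have h5 : (∫⁻ x, ENNReal.ofReal (u n x - u 0 x) ∂P) ≠ ⊤ := (lintegral_ofReal_lt_top hw).ne
    have h6 : ∫ x, u n x ∂P = ∫ x, u 0 x ∂P + ∫ x, (u n x - u 0 x) ∂P := by
      rw [← integral_add (hui 0) hw]
      congr 1
      funext x
      ring
    rw [h6, EReal.coe_add, h4, ereal_coe_toReal_enn h5]
  calc (⨆ n, ((∫ x, u n x ∂P : ℝ) : EReal))
      = ⨆ n, (((∫ x, u 0 x ∂P : ℝ) : EReal)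
          + ((∫⁻ x, ENNReal.ofReal (u n x - u 0 x) ∂P : ℝ≥0∞) : EReal)) := by
        exact iSup_congr step
    _ = ((∫ x, u 0 x ∂P : ℝ) : EReal)
          + ⨆ n, ((∫⁻ x, ENNReal.ofReal (u n x - u 0 x) ∂P : ℝ≥0∞) : EReal) :=
        (ereal_add_coe_iSup _ _).symm
    _ = ((∫ x, u 0 x ∂P : ℝ) : EReal)
          + ((⨆ n, ∫⁻ x, ENNReal.ofReal (u n x - u 0 x) ∂P : ℝ≥0∞) : EReal) := by
        rw [ereal_coe_ennreal_iSup]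
    _ = eIntegral P h := by
        rw [key]
        congr 1
        have hmeas : ∀ n, Measurable fun x => ENNReal.ofReal (u n x - u 0 x) :=
          fun n => ((hum n).sub (hum 0)).ennreal_ofReal
        have hm2 : Monotone fun n (x : Ω) => ENNReal.ofReal (u n x - u 0 x) := by
          intro m n hmn
          intro x
          exact ENNReal.ofReal_le_ofReal (by
            have := hmono' x hmn
            linarith)
        rw [← lintegral_iSup hmeas hm2]
        exact congrArg _ (lintegral_congr fun x =>
          sup_ofReal_eq_posE (fun n => hle n x) (hsup x) (u 0 x) (hle 0 x))

end MonoConv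

namespace Stmt0Aux

variable {a b : EReal} {f : ℝ → EReal}

noncomputable def F (f : ℝ → EReal) (x : ℝ) : ℝ := (f x).toReal

noncomputable def slp (f : ℝ → EReal) (p q : ℝ) : ℝ := (F f q - F f p) / (q - p)

def dom (f : ℝ → EReal) : Set ℝ := {x | f x ≠ ⊤}

def Minor (f : ℝ → EReal) (y c : ℝ) : Prop := ∀ x : ℝ, ((x * y - c : ℝ) : EReal) ≤ f x

lemma slp_mul {p q : ℝ} (h : p < q) : slp f p q * (q - p) = F f q - F f p :=
  div_mul_cancel₀ _ (by linarith : q - p ≠ 0)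

section conv
variable (hf : IsF1 a b f)
include hf

lemma mem_dom {x : ℝ} (h1 : a < (x : EReal)) (h2 : (x : EReal) < b) : x ∈ dom f :=
  hf.finite_on x h1 h2

lemma f_eq_F {x : ℝ} (hx : x ∈ dom f) : f x = ((F f x : ℝ) : EReal) :=
  (EReal.coe_toReal hx (hf.ne_bot x)).symm

lemma le_dom {x : ℝ} (hx : x ∈ dom f) : a ≤ (x : EReal) ∧ (x : EReal) ≤ b := by
  constructor
  · by_contra hc
    push_neg at hc
    exact hx (hf.top_outside x (Or.inl hc))
  · by_contra hc
    push_neg at hc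
    exact hx (hf.top_outside x (Or.inr hc))

lemma chord_ineq {p q z : ℝ} (hp : p ∈ dom f) (hq : q ∈ dom f) (hpz : p < z) (hzq : z < q) :
    z ∈ dom f ∧ F f z * (q - p) ≤ (q - z) * F f p + (z - p) * F f q := by
  have hpq : p < q := hpz.trans hzq
  set t : ℝ := (q - z) / (q - p) with ht
  have hqp : (0:ℝ) < q - p := by linarith
  have ht0 : 0 < t := div_pos (by linarith) hqp
  have ht1 : t < 1 := (div_lt_one hqp).2 (by linarith)
  have hz : t * p + (1 - t) * q = z := by
    rw [ht]
    field_simp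
    ring
  have hc := hf.convex p q t ht0 ht1
  rw [hz] at hc
  rw [f_eq_F hf hp, f_eq_F hf hq, ← EReal.coe_mul, ← EReal.coe_mul, ← EReal.coe_add] at hc
  have hzdom : z ∈ dom f := fun htop => by
    rw [htop] at hc
    exact (EReal.coe_ne_top _) (top_le_iff.1 hc)
  refine ⟨hzdom, ?_⟩
  rw [f_eq_F hf hzdom, EReal.coe_le_coe_iff] at hc
  have h2 : F f z * (q - p) ≤ (t * F f p + (1 - t) * F f q) * (q - p) :=
    mul_le_mul_of_nonneg_right hc hqp.le
  calc F f z * (q - p) ≤ (t * F f p + (1 - t) * F f q) * (q - p) := h2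
    _ = (q - z) * F f p + (z - p) * F f q := by
        rw [ht]
        field_simp
        ring

lemma slope_two {p q r : ℝ} (hp : p ∈ dom f) (hr : r ∈ dom f) (h1 : p < q) (h2 : q < r) :
    slp f p q ≤ slp f q r := by
  obtain ⟨hq, hch⟩ := chord_ineq hf hp hr h1 h2
  unfold slp
  rw [div_le_div_iff₀ (by linarith) (by linarith)]
  nlinarith [hch]

lemma slope_mono {p q u v : ℝ} (hp : p ∈ dom f) (hq : q ∈ dom f) (hu : u ∈ dom f)
    (hv : v ∈ dom f) (h1 : p < q) (h2 : q ≤ u) (h3 : u < v) : slp f p q ≤ slp f u v := by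
  rcases eq_or_lt_of_le h2 with rfl | h2
  · exact slope_two hf hp hv h1 h3
  · exact (slope_two hf hp hu h1 h2).trans (slope_two hf hq hv h2 h3)

lemma minor_of_dom {y c : ℝ} (h : ∀ x ∈ dom f, x * y - c ≤ F f x) : Minor f y c := by
  intro x
  by_cases hx : x ∈ dom f
  · rw [f_eq_F hf hx]
    exact_mod_cast h x hx
  · have : f x = ⊤ := not_not.1 hx
    rw [this]
    exact le_top

lemma minor_chordL {p₀ q₀ p q : ℝ} (h0 : p₀ ∈ dom f) (h1 : q₀ ∈ dom f) (h2 : p ∈ dom f)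
    (h3 : q ∈ dom f) (o1 : p₀ < q₀) (o2 : q₀ ≤ p) (o3 : p < q) :
    Minor f (slp f p q) (q * slp f p q - F f q + (q - p) * (slp f p q - slp f p₀ q₀)) := by
  set s := slp f p q with hs
  set σ := slp f p₀ q₀ with hσ
  have hσs : σ ≤ s := slope_mono hf h0 h1 h2 h3 o1 o2 o3
  have hchord : s * (q - p) = F f q - F f p := slp_mul o3
  have e3 : 0 ≤ (q - p) * (s - σ) := mul_nonneg (by linarith) (by linarith)
  apply minor_of_dom hf
  intro z hz
  rcases le_or_gt z p with hzp | hpz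
  · rcases eq_or_lt_of_le hzp with rfl | hzp
    · nlinarith [hchord, e3]
    · have hs2 : slp f z p ≤ s := slope_mono hf hz h2 h2 h3 hzp le_rfl o3
      have e1 : slp f z p * (p - z) = F f p - F f z := slp_mul hzp
      have e2 : slp f z p * (p - z) ≤ s * (p - z) :=
        mul_le_mul_of_nonneg_right hs2 (by linarith)
      nlinarith [hchord, e3, e1, e2]
  · rcases le_or_gt z q with hzq | hqz
    · rcases eq_or_lt_of_le hzq with rfl | hzq
      · nlinarith [e3]
      · have e4 : σ ≤ slp f p z := slope_mono hf h0 h1 h2 hz o1 o2 hpz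
        have e5 : slp f p z * (z - p) = F f z - F f p := slp_mul hpz
        have e6 : σ * (z - p) ≤ slp f p z * (z - p) :=
          mul_le_mul_of_nonneg_right e4 (by linarith)
        have e7 : (s - σ) * (z - p) ≤ (s - σ) * (q - p) :=
          mul_le_mul_of_nonneg_left (by linarith) (by linarith)
        nlinarith [hchord, e5, e6, e7]
    · have e8 : s ≤ slp f q z := slope_mono hf h2 h3 h3 hz o3 le_rfl hqz
      have e9 : slp f q z * (z - q) = F f z - F f q := slp_mul hqz
      have e10 : s * (z - q) ≤ slp f q z * (z - q) :=
        mul_le_mul_of_nonneg_right e8 (by linarith)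
      nlinarith [e9, e10, e3]

lemma minor_chordR {p q p₀ q₀ : ℝ} (h2 : p ∈ dom f) (h3 : q ∈ dom f) (h0 : p₀ ∈ dom f)
    (h1 : q₀ ∈ dom f) (o1 : p < q) (o2 : q ≤ p₀) (o3 : p₀ < q₀) :
    Minor f (slp f p q) (p * slp f p q - F f p + (q - p) * (slp f p₀ q₀ - slp f p q)) := by
  set s := slp f p q with hs
  set σ' := slp f p₀ q₀ with hσ
  have hσs : s ≤ σ' := slope_mono hf h2 h3 h0 h1 o1 o2 o3
  have hchord : s * (q - p) = F f q - F f p := slp_mul o1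
  have e3 : 0 ≤ (q - p) * (σ' - s) := mul_nonneg (by linarith) (by linarith)
  apply minor_of_dom hf
  intro z hz
  rcases le_or_gt z p with hzp | hpz
  · rcases eq_or_lt_of_le hzp with rfl | hzp
    · nlinarith [e3]
    · have hs2 : slp f z p ≤ s := slope_mono hf hz h2 h2 h3 hzp le_rfl o1
      have e1 : slp f z p * (p - z) = F f p - F f z := slp_mul hzp
      have e2 : slp f z p * (p - z) ≤ s * (p - z) :=
        mul_le_mul_of_nonneg_right hs2 (by linarith)
      nlinarith [e3, e1, e2]
  · rcases le_or_gt z q with hzq | hzq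
    · rcases eq_or_lt_of_le hzq with rfl | hzq
      · nlinarith [hchord, e3]
      · have e4 : slp f z q ≤ σ' := slope_mono hf hz h3 h0 h1 hzq o2 o3
        have e5 : slp f z q * (q - z) = F f q - F f z := slp_mul hzq
        have e6 : slp f z q * (q - z) ≤ σ' * (q - z) :=
          mul_le_mul_of_nonneg_right e4 (by linarith)
        have e7 : (σ' - s) * (q - z) ≤ (σ' - s) * (q - p) :=
          mul_le_mul_of_nonneg_left (by linarith) (by linarith)
        nlinarith [hchord, e5, e6, e7]
    · have e8 : s ≤ slp f q z := slope_mono hf h2 h3 h3 hz o1 le_rfl hzq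
      have e9 : slp f q z * (z - q) = F f z - F f q := slp_mul hzq
      have e10 : s * (z - q) ≤ slp f q z * (z - q) :=
        mul_le_mul_of_nonneg_right e8 (by linarith)
      nlinarith [hchord, e9, e10, e3]

lemma cone_lower {p₀ q₀ q₁ : ℝ} (h0 : p₀ ∈ dom f) (h1 : q₀ ∈ dom f) (h2 : q₁ ∈ dom f)
    (o1 : p₀ < q₀) (o2 : q₀ < q₁) :
    ∀ z ∈ dom f, F f q₀ - (max |slp f p₀ q₀| |slp f q₀ q₁|) * |z - q₀| ≤ F f z := by
  intro z hz
  set M := max |slp f p₀ q₀| |slp f q₀ q₁| with hM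
  have hM0 : 0 ≤ M := le_trans (abs_nonneg _) (le_max_left _ _)
  rcases lt_trichotomy z q₀ with hzq | rfl | hzq
  · have e4 : slp f z q₀ ≤ slp f q₀ q₁ := slope_mono hf hz h1 h1 h2 hzq le_rfl o2
    have e5 : slp f z q₀ * (q₀ - z) = F f q₀ - F f z := slp_mul hzq
    have e6 : slp f z q₀ * (q₀ - z) ≤ M * (q₀ - z) :=
      mul_le_mul_of_nonneg_right (e4.trans ((le_abs_self _).trans (le_max_right _ _)))
        (by linarith)
    rw [abs_of_neg (by linarith : z - q₀ < 0)]
    nlinarith [e5, e6]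
  · simp [hM0]
  · have e4 : slp f p₀ q₀ ≤ slp f q₀ z := slope_mono hf h0 h1 h1 hz o1 le_rfl hzq
    have e5 : slp f q₀ z * (z - q₀) = F f z - F f q₀ := slp_mul hzq
    have e6 : (-M) * (z - q₀) ≤ slp f q₀ z * (z - q₀) := by
      apply mul_le_mul_of_nonneg_right _ (by linarith)
      have : -M ≤ slp f p₀ q₀ := by
        have := (neg_abs_le (slp f p₀ q₀))
        have h7 : |slp f p₀ q₀| ≤ M := le_max_left _ _
        linarith
      linarith
    rw [abs_of_pos (by linarith : (0:ℝ) < z - q₀)]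
    nlinarith [e5, e6]

lemma minor_tailR {p₀ q₀ q₁ B : ℝ} (h0 : p₀ ∈ dom f) (h1 : q₀ ∈ dom f) (h2 : q₁ ∈ dom f)
    (o1 : p₀ < q₀) (o2 : q₀ < q₁) (hB : ∀ z ∈ dom f, z ≤ B) {y : ℝ}
    (hy : max |slp f p₀ q₀| |slp f q₀ q₁| ≤ y) :
    Minor f y (B * y + (max |slp f p₀ q₀| |slp f q₀ q₁|) * (B - q₀) - F f q₀) := by
  set M := max |slp f p₀ q₀| |slp f q₀ q₁| with hM
  have hM0 : 0 ≤ M := le_trans (abs_nonneg _) (le_max_left _ _)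
  apply minor_of_dom hf
  intro z hz
  have hzB : z ≤ B := hB z hz
  have hq₀B : q₀ ≤ B := hB q₀ h1
  have hcone := cone_lower hf h0 h1 h2 o1 o2 z hz
  have habs : |z - q₀| ≤ (B - z) + (B - q₀) := by
    rcases le_or_gt z q₀ with h | h
    · rw [abs_of_nonpos (by linarith)]; linarith
    · rw [abs_of_pos (by linarith)]; linarith
  have h5 : M * |z - q₀| ≤ M * ((B - z) + (B - q₀)) :=
    mul_le_mul_of_nonneg_left habs hM0
  have h6 : M * (B - z) ≤ y * (B - z) := mul_le_mul_of_nonneg_right hy (by linarith)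
  nlinarith [hcone, h5, h6]

lemma minor_tailL {p₀ q₀ q₁ A : ℝ} (h0 : p₀ ∈ dom f) (h1 : q₀ ∈ dom f) (h2 : q₁ ∈ dom f)
    (o1 : p₀ < q₀) (o2 : q₀ < q₁) (hA : ∀ z ∈ dom f, A ≤ z) {y : ℝ}
    (hy : y ≤ -(max |slp f p₀ q₀| |slp f q₀ q₁|)) :
    Minor f y (A * y + (max |slp f p₀ q₀| |slp f q₀ q₁|) * (q₀ - A) - F f q₀) := by
  set M := max |slp f p₀ q₀| |slp f q₀ q₁| with hM
  have hM0 : 0 ≤ M := le_trans (abs_nonneg _) (le_max_left _ _)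
  apply minor_of_dom hf
  intro z hz
  have hzA : A ≤ z := hA z hz
  have hq₀A : A ≤ q₀ := hA q₀ h1
  have hcone := cone_lower hf h0 h1 h2 o1 o2 z hz
  have habs : |z - q₀| ≤ (z - A) + (q₀ - A) := by
    rcases le_or_gt z q₀ with h | h
    · rw [abs_of_nonpos (by linarith)]; linarith
    · rw [abs_of_pos (by linarith)]; linarith
  have h5 : M * |z - q₀| ≤ M * ((z - A) + (q₀ - A)) :=
    mul_le_mul_of_nonneg_left habs hM0
  have h6 : y * (z - A) ≤ (-M) * (z - A) := mul_le_mul_of_nonneg_right hy (by linarith)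
  nlinarith [hcone, h5, h6]

end conv
end Stmt0Aux

namespace Stmt0Aux

open Set

variable {a b : EReal} {f : ℝ → EReal}

set_option maxHeartbeats 1600000 in
lemma exists_biconj (hf : IsF1 a b f) :
    ∃ (y c : ℕ → ℝ), (∀ n, Minor f (y n) (c n)) ∧
      (∀ r : ℝ, (⨆ n, (((r * y n - c n : ℝ)) : EReal)) = f r) := by
  classical
  set g1 : ℚ × ℚ × ℚ × ℚ → ℝ × ℝ := fun t =>
    (slp f t.2.2.1 t.2.2.2,
      (t.2.2.2 : ℝ) * slp f t.2.2.1 t.2.2.2 - F f t.2.2.2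
        + ((t.2.2.2 : ℝ) - t.2.2.1) * (slp f t.2.2.1 t.2.2.2 - slp f t.1 t.2.1)) with hg1
  set g2 : ℚ × ℚ × ℚ × ℚ → ℝ × ℝ := fun t =>
    (slp f t.1 t.2.1,
      (t.1 : ℝ) * slp f t.1 t.2.1 - F f t.1
        + ((t.2.1 : ℝ) - t.1) * (slp f t.2.2.1 t.2.2.2 - slp f t.1 t.2.1)) with hg2
  set g3 : ℚ × ℚ × ℚ × ℚ → ℝ × ℝ := fun t =>
    ((t.2.2.2 : ℝ),
      b.toReal * (t.2.2.2 : ℝ)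
        + (max |slp f t.1 t.2.1| |slp f t.2.1 t.2.2.1|) * (b.toReal - t.2.1) - F f t.2.1) with hg3
  set g4 : ℚ × ℚ × ℚ × ℚ → ℝ × ℝ := fun t =>
    ((t.2.2.2 : ℝ),
      a.toReal * (t.2.2.2 : ℝ)
        + (max |slp f t.1 t.2.1| |slp f t.2.1 t.2.2.1|) * ((t.2.1 : ℝ) - a.toReal) - F f t.2.1) with hg4
  set T : Set (ℝ × ℝ) :=
    {t : ℝ × ℝ | Minor f t.1 t.2} ∩ ((range g1 ∪ range g2) ∪ (range g3 ∪ range g4)) with hT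
  have hcount : T.Countable :=
    Set.Countable.mono inter_subset_right
      (((countable_range g1).union (countable_range g2)).union
        ((countable_range g3).union (countable_range g4)))
  -- points below 1
  obtain ⟨w1, haw1, hw11'⟩ := EReal.lt_iff_exists_real_btwn.1 hf.a_lt_one
  have hw11 : w1 < 1 := EReal.coe_lt_coe_iff.1 hw11'
  have hdom1 : ∀ x : ℝ, w1 < x → x < 1 → x ∈ dom f := fun x h1 h2 =>
    mem_dom hf (haw1.trans (EReal.coe_lt_coe_iff.2 h1))
      ((EReal.coe_lt_coe_iff.2 h2).trans hf.one_lt_b)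
  have hne : T.Nonempty := by
    obtain ⟨r1, hr11, hr12⟩ := exists_rat_btwn hw11
    obtain ⟨r2, hr21, hr22⟩ := exists_rat_btwn hr11
    obtain ⟨r3, hr31, hr32⟩ := exists_rat_btwn hr21
    obtain ⟨r4, hr41, hr42⟩ := exists_rat_btwn hr31
    have d1 : (r1 : ℝ) ∈ dom f := hdom1 r1 (by linarith) (by linarith)
    have d2 : (r2 : ℝ) ∈ dom f := hdom1 r2 (by linarith) (by linarith)
    have d3 : (r3 : ℝ) ∈ dom f := hdom1 r3 (by linarith) (by linarith)
    have d4 : (r4 : ℝ) ∈ dom f := hdom1 r4 (by linarith) (by linarith)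
    refine ⟨g1 (r4, r3, r2, r1), ?_, Or.inl (Or.inl (mem_range_self _))⟩
    exact minor_chordL hf d4 d3 d2 d1 (by exact_mod_cast hr42) (by exact_mod_cast hr32.le)
      (by exact_mod_cast hr22)
  obtain ⟨e, he⟩ := hcount.exists_eq_range hne
  refine ⟨fun n => (e n).1, fun n => (e n).2, ?_, ?_⟩
  · intro n
    have : e n ∈ T := by rw [he]; exact mem_range_self n
    exact this.1
  intro r
  apply le_antisymm
  · exact iSup_le fun n => by
      have hm : e n ∈ T := by rw [he]; exact mem_range_self n
      exact hm.1 r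
  set S := ⨆ n, (((r * (e n).1 - (e n).2 : ℝ)) : EReal) with hS
  have hmemle : ∀ t ∈ T, ((r * t.1 - t.2 : ℝ) : EReal) ≤ S := by
    intro t ht
    rw [he] at ht
    rcases ht with ⟨n, rfl⟩
    exact le_iSup (fun n => (((r * (e n).1 - (e n).2 : ℝ)) : EReal)) n
  rcases lt_or_ge b (r : EReal) with hbr | hrb
  · -- CASE TR : b < r
    have hbt : b ≠ ⊤ := fun h => by rw [h] at hbr; exact (not_top_lt hbr)
    have hbb : b ≠ ⊥ := fun h => by
      rw [h] at hf
      exact absurd hf.one_lt_b (by simp)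
    have hbB : b = ((b.toReal : ℝ) : EReal) := (EReal.coe_toReal hbt hbb).symm
    set B := b.toReal with hB
    have hBr : B < r := EReal.coe_lt_coe_iff.1 (hbB ▸ hbr)
    have hdomB : ∀ z ∈ dom f, z ≤ B := fun z hz =>
      EReal.coe_le_coe_iff.1 (by rw [← hbB]; exact (le_dom hf hz).2)
    obtain ⟨r1, hr11, hr12⟩ := exists_rat_btwn hw11
    obtain ⟨r2, hr21, hr22⟩ := exists_rat_btwn hr11
    obtain ⟨r3, hr31, hr32⟩ := exists_rat_btwn hr21
    have d1 : (r1 : ℝ) ∈ dom f := hdom1 r1 (by linarith) (by linarith)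
    have d2 : (r2 : ℝ) ∈ dom f := hdom1 r2 (by linarith) (by linarith)
    have d3 : (r3 : ℝ) ∈ dom f := hdom1 r3 (by linarith) (by linarith)
    set M0 := max |slp f (r3:ℝ) (r2:ℝ)| |slp f (r2:ℝ) (r1:ℝ)| with hM0
    apply ereal_le_of_forall_real_lt
    intro c' _
    obtain ⟨y, hy⟩ := exists_rat_gt (max M0 ((c' + M0 * (B - r2) - F f r2) / (r - B)))
    have hy1 : M0 ≤ (y:ℝ) := ((le_max_left _ _).trans hy.le)
    have hy2 : (c' + M0 * (B - r2) - F f r2) / (r - B) < y := (le_max_right _ _).trans_lt hy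
    have hmem : g3 (r3, r2, r1, y) ∈ T := by
      refine ⟨?_, Or.inr (Or.inl (mem_range_self _))⟩
      exact minor_tailR hf d3 d2 d1 (by exact_mod_cast hr32) (by exact_mod_cast hr22) hdomB hy1
    have hval := hmemle _ hmem
    have harr : c' ≤ r * (y:ℝ) - (B * y + M0 * (B - (r2:ℝ)) - F f r2) := by
      have h7 : c' + M0 * (B - r2) - F f r2 < (y:ℝ) * (r - B) := by
        rw [div_lt_iff₀ (by linarith)] at hy2
        linarith [hy2]
      nlinarith [h7]
    calc ((c' : ℝ) : EReal) ≤ ((r * (y:ℝ) - (B * y + M0 * (B - (r2:ℝ)) - F f r2) : ℝ) : EReal) := by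
          exact_mod_cast harr
      _ ≤ S := hval
  rcases lt_or_ge (r : EReal) a with hra | har
  · -- CASE TL : r < a
    have hat : a ≠ ⊤ := fun h => by
      rw [h] at hf
      exact absurd hf.a_lt_one (by simp)
    have hab : a ≠ ⊥ := fun h => by rw [h] at hra; exact (not_lt_bot hra)
    have haA : a = ((a.toReal : ℝ) : EReal) := (EReal.coe_toReal hat hab).symm
    set A := a.toReal with hA
    have hAr : r < A := EReal.coe_lt_coe_iff.1 (haA ▸ hra)
    have hdomA : ∀ z ∈ dom f, A ≤ z := fun z hz =>
      EReal.coe_le_coe_iff.1 (by rw [← haA]; exact (le_dom hf hz).1)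
    obtain ⟨w2, h1w2', hw2b⟩ := EReal.lt_iff_exists_real_btwn.1 hf.one_lt_b
    have h1w2 : 1 < w2 := EReal.coe_lt_coe_iff.1 h1w2'
    have hdom2 : ∀ x : ℝ, 1 < x → x < w2 → x ∈ dom f := fun x h1 h2 =>
      mem_dom hf (hf.a_lt_one.trans (EReal.coe_lt_coe_iff.2 h1))
        ((EReal.coe_lt_coe_iff.2 h2).trans hw2b)
    obtain ⟨r1, hr11, hr12⟩ := exists_rat_btwn h1w2
    obtain ⟨r2, hr21, hr22⟩ := exists_rat_btwn hr12
    obtain ⟨r3, hr31, hr32⟩ := exists_rat_btwn hr22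
    have d1 : (r1 : ℝ) ∈ dom f := hdom2 r1 (by linarith) (by linarith)
    have d2 : (r2 : ℝ) ∈ dom f := hdom2 r2 (by linarith) (by linarith)
    have d3 : (r3 : ℝ) ∈ dom f := hdom2 r3 (by linarith) (by linarith)
    set M0 := max |slp f (r1:ℝ) (r2:ℝ)| |slp f (r2:ℝ) (r3:ℝ)| with hM0
    apply ereal_le_of_forall_real_lt
    intro c' _
    obtain ⟨y, hy⟩ := exists_rat_lt (min (-M0) ((c' + M0 * ((r2:ℝ) - A) - F f r2) / (r - A)))
    have hy1 : (y:ℝ) ≤ -M0 := hy.le.trans (min_le_left _ _)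
    have hy2 : (y:ℝ) < (c' + M0 * ((r2:ℝ) - A) - F f r2) / (r - A) :=
      hy.trans_le (min_le_right _ _)
    have hmem : g4 (r1, r2, r3, y) ∈ T := by
      refine ⟨?_, Or.inr (Or.inr (mem_range_self _))⟩
      exact minor_tailL hf d1 d2 d3 (by exact_mod_cast hr21) (by exact_mod_cast hr31) hdomA hy1
    have hval := hmemle _ hmem
    have harr : c' ≤ r * (y:ℝ) - (A * y + M0 * ((r2:ℝ) - A) - F f r2) := by
      have h7 : c' + M0 * ((r2:ℝ) - A) - F f r2 ≤ (y:ℝ) * (r - A) := by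
        rw [lt_div_iff_of_neg (by linarith)] at hy2
        linarith [hy2]
      nlinarith [h7]
    calc ((c' : ℝ) : EReal)
        ≤ ((r * (y:ℝ) - (A * y + M0 * ((r2:ℝ) - A) - F f r2) : ℝ) : EReal) := by
          exact_mod_cast harr
      _ ≤ S := hval
  rcases eq_or_lt_of_le har with haeq | halt
  · -- CASE R : a = r, r < b
    have hrb2 : (r : EReal) < b := by
      rw [← haeq]
      exact hf.a_lt_one.trans hf.one_lt_b
    apply ereal_le_of_forall_real_lt
    intro c' hc'
    apply ereal_coe_le_of_forall_sub
    intro ε hε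
    obtain ⟨w, hrw', hwb⟩ := EReal.lt_iff_exists_real_btwn.1 hrb2
    have hrw : r < w := EReal.coe_lt_coe_iff.1 hrw'
    have hdomI : ∀ x : ℝ, r < x → x < w → x ∈ dom f := fun x h1 h2 =>
      mem_dom hf (haeq ▸ (EReal.coe_lt_coe_iff.2 h1)) ((EReal.coe_lt_coe_iff.2 h2).trans hwb)
    obtain ⟨p₀, hp₀1, hp₀2⟩ := exists_rat_btwn hrw
    obtain ⟨q₀, hq₀1, hq₀2⟩ := exists_rat_btwn hp₀2
    have dp₀ : (p₀ : ℝ) ∈ dom f := hdomI p₀ hp₀1 (by exact_mod_cast hq₀1.trans hq₀2)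
    have dq₀ : (q₀ : ℝ) ∈ dom f := hdomI q₀ (hp₀1.trans (by exact_mod_cast hq₀1)) hq₀2
    set σ' := slp f (p₀:ℝ) (q₀:ℝ) with hσ'
    obtain ⟨δ, hδ, hball⟩ := Metric.eventually_nhds_iff.1 (hf.lsc r (c' : EReal) hc')
    set ε₁ := ε / 3 with hε₁
    have hε₁0 : 0 < ε₁ := by positivity
    have hm : r < min (p₀:ℝ) (min (r + δ) (r + ε₁ / (|σ'| + 1))) := by
      apply lt_min hp₀1
      apply lt_min (by linarith)
      have : 0 < ε₁ / (|σ'| + 1) := by positivity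
      linarith
    obtain ⟨p, hp1, hp2⟩ := exists_rat_btwn hm
    have hpp₀ : (p:ℝ) < p₀ := hp2.trans_le (min_le_left _ _)
    have hpδ : (p:ℝ) < r + δ := hp2.trans_le ((min_le_right _ _).trans (min_le_left _ _))
    have hpε : (p:ℝ) < r + ε₁ / (|σ'| + 1) :=
      hp2.trans_le ((min_le_right _ _).trans (min_le_right _ _))
    have dp : (p:ℝ) ∈ dom f := hdomI p hp1 (by linarith)
    have hFp : c' < F f p := by
      have hd : dist (p:ℝ) r < δ := by
        rw [Real.dist_eq, abs_of_pos (by linarith : (0:ℝ) < (p:ℝ) - r)]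
        linarith
      have : ((c' : ℝ) : EReal) < f (p:ℝ) := hball hd
      rw [f_eq_F hf dp] at this
      exact_mod_cast this
    obtain ⟨q'', hq''1, hq''2⟩ := exists_rat_btwn hp1
    have dq'' : (q'':ℝ) ∈ dom f := hdomI q'' hq''1 (by linarith)
    set τ' := slp f (q'':ℝ) (p:ℝ) with hτ'
    have hτσ : τ' ≤ σ' := slope_mono hf dq'' dp dp₀ dq₀ hq''2 hpp₀.le (by exact_mod_cast hq₀1)
    have hm2 : (p:ℝ) < min (p₀:ℝ) ((p:ℝ) + ε₁ / (σ' - τ' + 1)) := by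
      apply lt_min hpp₀
      have : 0 < ε₁ / (σ' - τ' + 1) := div_pos hε₁0 (by linarith)
      linarith
    obtain ⟨q, hq1, hq2⟩ := exists_rat_btwn hm2
    have hqp₀ : (q:ℝ) < p₀ := hq2.trans_le (min_le_left _ _)
    have hqε : (q:ℝ) < (p:ℝ) + ε₁ / (σ' - τ' + 1) := hq2.trans_le (min_le_right _ _)
    have dq : (q:ℝ) ∈ dom f := hdomI q (hp1.trans hq1) (by linarith)
    set s := slp f (p:ℝ) (q:ℝ) with hs
    have hτs : τ' ≤ s := slope_mono hf dq'' dp dp dq hq''2 le_rfl hq1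
    have hsσ : s ≤ σ' := slope_mono hf dp dq dp₀ dq₀ hq1 hqp₀.le (by exact_mod_cast hq₀1)
    have hmem : g2 (p, q, p₀, q₀) ∈ T := by
      refine ⟨?_, Or.inl (Or.inr (mem_range_self _))⟩
      exact minor_chordR hf dp dq dp₀ dq₀ (by exact_mod_cast hq1) hqp₀.le
        (by exact_mod_cast hq₀1)
    have hval := hmemle _ hmem
    have harr : c' - ε ≤ r * s - ((p:ℝ) * s - F f p + ((q:ℝ) - p) * (σ' - s)) := by
      have h61 : ((p:ℝ) - r) * (|σ'| + 1) ≤ ε₁ := by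
        rw [← le_div_iff₀ (by positivity)]
        linarith
      have h62 : ((q:ℝ) - p) * (σ' - τ' + 1) ≤ ε₁ := by
        rw [← le_div_iff₀ (by linarith)]
        linarith
      have B1 : ((p:ℝ) - r) * s ≤ ε₁ := by
        have h8 : s ≤ |σ'| + 1 := by
          have := le_abs_self σ'
          linarith
        nlinarith [h8, h61]
      have B2 : ((q:ℝ) - p) * (σ' - s) ≤ ε₁ := by
        have h8 : σ' - s ≤ σ' - τ' + 1 := by linarith
        nlinarith [h8, h62]
      nlinarith [B1, B2, hFp]
    calc ((c' - ε : ℝ) : EReal)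
        ≤ ((r * s - ((p:ℝ) * s - F f p + ((q:ℝ) - p) * (σ' - s)) : ℝ) : EReal) := by
          exact_mod_cast harr
      _ ≤ S := hval
  · -- CASE L : a < r ≤ b
    apply ereal_le_of_forall_real_lt
    intro c' hc'
    apply ereal_coe_le_of_forall_sub
    intro ε hε
    obtain ⟨w, haw, hwr'⟩ := EReal.lt_iff_exists_real_btwn.1 halt
    have hwr : w < r := EReal.coe_lt_coe_iff.1 hwr'
    have hdomI : ∀ x : ℝ, w < x → x < r → x ∈ dom f := fun x h1 h2 =>
      mem_dom hf (haw.trans (EReal.coe_lt_coe_iff.2 h1))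
        (lt_of_lt_of_le (EReal.coe_lt_coe_iff.2 h2) hrb)
    obtain ⟨q₀, hq₀1, hq₀2⟩ := exists_rat_btwn hwr
    obtain ⟨p₀, hp₀1, hp₀2⟩ := exists_rat_btwn hq₀1
    have dq₀ : (q₀ : ℝ) ∈ dom f := hdomI q₀ hq₀1 hq₀2
    have dp₀ : (p₀ : ℝ) ∈ dom f := hdomI p₀ hp₀1 ((by exact_mod_cast hp₀2 : (p₀:ℝ) < q₀).trans hq₀2)
    set σ := slp f (p₀:ℝ) (q₀:ℝ) with hσ
    obtain ⟨δ, hδ, hball⟩ := Metric.eventually_nhds_iff.1 (hf.lsc r (c' : EReal) hc')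
    set ε₁ := ε / 3 with hε₁
    have hε₁0 : 0 < ε₁ := by positivity
    have hm : max (q₀:ℝ) (max (r - δ) (r - ε₁ / (|σ| + 1))) < r := by
      apply max_lt hq₀2
      apply max_lt (by linarith)
      have : 0 < ε₁ / (|σ| + 1) := by positivity
      linarith
    obtain ⟨q, hq1, hq2⟩ := exists_rat_btwn hm
    have hq₀q : (q₀:ℝ) < q := (le_max_left _ _).trans_lt hq1
    have hqδ : r - δ < (q:ℝ) := ((le_max_left _ _).trans (le_max_right _ _)).trans_lt hq1
    have hqε : r - ε₁ / (|σ| + 1) < (q:ℝ) :=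
      ((le_max_right _ _).trans (le_max_right _ _)).trans_lt hq1
    have dq : (q:ℝ) ∈ dom f := hdomI q (by linarith [hp₀1, hp₀2]) hq2
    have hFq : c' < F f q := by
      have hd : dist (q:ℝ) r < δ := by
        rw [Real.dist_eq, abs_of_neg (by linarith : (q:ℝ) - r < 0)]
        linarith
      have : ((c' : ℝ) : EReal) < f (q:ℝ) := hball hd
      rw [f_eq_F hf dq] at this
      exact_mod_cast this
    obtain ⟨q'', hq''1, hq''2⟩ := exists_rat_btwn hq2
    have dq'' : (q'':ℝ) ∈ dom f := hdomI q'' (by linarith [hp₀1, hp₀2, hq₀q]) hq''2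
    set τ := slp f (q:ℝ) (q'':ℝ) with hτ
    have hστ : σ ≤ τ := slope_mono hf dp₀ dq₀ dq dq'' (by exact_mod_cast hp₀2) hq₀q.le hq''1
    have hm2 : max (q₀:ℝ) ((q:ℝ) - ε₁ / (τ - σ + 1)) < q := by
      apply max_lt hq₀q
      have : 0 < ε₁ / (τ - σ + 1) := div_pos hε₁0 (by linarith)
      linarith
    obtain ⟨p, hp1, hp2⟩ := exists_rat_btwn hm2
    have hq₀p : (q₀:ℝ) < p := (le_max_left _ _).trans_lt hp1
    have hpε : (q:ℝ) - ε₁ / (τ - σ + 1) < (p:ℝ) := (le_max_right _ _).trans_lt hp1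
    have dp : (p:ℝ) ∈ dom f := hdomI p (by linarith [hp₀1, hp₀2]) (hp2.trans hq2)
    set s := slp f (p:ℝ) (q:ℝ) with hs
    have hσs : σ ≤ s := slope_mono hf dp₀ dq₀ dp dq (by exact_mod_cast hp₀2) hq₀p.le hp2
    have hsτ : s ≤ τ := slope_mono hf dp dq dq dq'' hp2 le_rfl hq''1
    have hmem : g1 (p₀, q₀, p, q) ∈ T := by
      refine ⟨?_, Or.inl (Or.inl (mem_range_self _))⟩
      exact minor_chordL hf dp₀ dq₀ dp dq (by exact_mod_cast hp₀2) hq₀p.le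
        (by exact_mod_cast hp2)
    have hval := hmemle _ hmem
    have harr : c' - ε ≤ r * s - ((q:ℝ) * s - F f q + ((q:ℝ) - p) * (s - σ)) := by
      have h61 : (r - (q:ℝ)) * (|σ| + 1) ≤ ε₁ := by
        rw [← le_div_iff₀ (by positivity)]
        linarith
      have h62 : ((q:ℝ) - p) * (τ - σ + 1) ≤ ε₁ := by
        rw [← le_div_iff₀ (by linarith)]
        linarith
      have B1 : -ε₁ ≤ (r - (q:ℝ)) * s := by
        have h8 : -(|σ| + 1) ≤ s := by
          have := neg_abs_le σ
          linarith
        nlinarith [h8, h61]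
      have B2 : ((q:ℝ) - p) * (s - σ) ≤ ε₁ := by
        have h8 : s - σ ≤ τ - σ + 1 := by linarith
        nlinarith [h8, h62]
      nlinarith [B1, B2, hFq]
    calc ((c' - ε : ℝ) : EReal)
        ≤ ((r * s - ((q:ℝ) * s - F f q + ((q:ℝ) - p) * (s - σ)) : ℝ) : EReal) := by
          exact_mod_cast harr
      _ ≤ S := hval

end Stmt0Aux

section FstarSec
variable {a b : EReal} {f : ℝ → EReal}

lemma ereal_coe_sub_iInf (r : ℝ) {ι : Sort*} [Nonempty ι] (t : ι → EReal) :
    (r : EReal) - ⨅ i, t i = ⨆ i, ((r : EReal) - t i) := by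
  apply le_antisymm
  · rcases eq_or_ne (⨅ i, t i) ⊥ with hb | hb
    · rw [hb, EReal.sub_bot (EReal.coe_ne_bot r)]
      apply (ereal_eq_top_of_forall_coe_le fun c => ?_).ge
      have : (⨅ i, t i) < ((r - c : ℝ) : EReal) := hb ▸ EReal.bot_lt_coe _
      rcases iInf_lt_iff.1 this with ⟨i, hi⟩
      calc ((c : ℝ) : EReal) = ((r - (r - c) : ℝ) : EReal) := by norm_num
        _ ≤ (r : EReal) - t i := by
            rw [EReal.coe_sub]
            exact EReal.sub_le_sub le_rfl hi.le
        _ ≤ _ := le_iSup (fun i => (r : EReal) - t i) i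
    rcases eq_or_ne (⨅ i, t i) ⊤ with ht | ht
    · rw [ht, EReal.sub_top]
      exact bot_le
    · rw [← EReal.coe_toReal ht hb, ← EReal.coe_sub]
      apply ereal_coe_le_of_forall_sub
      intro ε hε
      have h9 : (⨅ i, t i) < (((⨅ i, t i).toReal + ε : ℝ) : EReal) := by
        conv_lhs => rw [← EReal.coe_toReal ht hb]
        exact_mod_cast lt_add_of_pos_right _ hε
      rcases iInf_lt_iff.1 h9 with ⟨i, hi⟩
      calc ((r - (⨅ i, t i).toReal - ε : ℝ) : EReal)
          = ((r - ((⨅ i, t i).toReal + ε) : ℝ) : EReal) := by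
            rw [show r - (⨅ i, t i).toReal - ε = r - ((⨅ i, t i).toReal + ε) by ring]
        _ ≤ (r : EReal) - t i := by
            rw [EReal.coe_sub]
            exact EReal.sub_le_sub le_rfl hi.le
        _ ≤ _ := le_iSup (fun i => (r : EReal) - t i) i
  · apply iSup_le fun i => EReal.sub_le_sub le_rfl (iInf_le t i)

lemma coe_le_fstar (hf1 : f 1 = 0) (y : ℝ) : (y : EReal) ≤ fstar f y := by
  have h := le_iSup (fun x : ℝ => (((x * y : ℝ) : EReal) - f x)) 1
  rw [hf1, one_mul] at h
  simp at h
  exact h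

lemma fstar_ne_bot (hf1 : f 1 = 0) (y : ℝ) : fstar f y ≠ ⊥ :=
  fun h => EReal.coe_ne_bot y (le_bot_iff.1 (h ▸ coe_le_fstar hf1 y))

lemma young (hfb : ∀ x, f x ≠ ⊥) (hf1 : f 1 = 0) (x y : ℝ) :
    ((x * y : ℝ) : EReal) ≤ f x + fstar f y := by
  have h := le_iSup (fun x : ℝ => (((x * y : ℝ) : EReal) - f x)) x
  have h2 : ((x * y : ℝ) : EReal) ≤ fstar f y + f x :=
    (EReal.sub_le_iff_le_add (Or.inl (hfb x)) (Or.inr (fstar_ne_bot hf1 y))).1 h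
  rwa [add_comm] at h2

lemma fstar_le_of_minor (hfb : ∀ x, f x ≠ ⊥) {y c : ℝ}
    (hm : ∀ x : ℝ, ((x * y - c : ℝ) : EReal) ≤ f x) : fstar f y ≤ (c : EReal) := by
  apply iSup_le
  intro x
  have h1 : ((x * y : ℝ) : EReal) - (c : EReal) ≤ f x := by
    rw [← EReal.coe_sub]; exact hm x
  have h2 : ((x * y : ℝ) : EReal) ≤ f x + (c : EReal) :=
    (EReal.sub_le_iff_le_add (Or.inl (EReal.coe_ne_bot c)) (Or.inl (EReal.coe_ne_top c))).1 h1
  rw [add_comm] at h2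
  exact (EReal.sub_le_iff_le_add (Or.inl (hfb x)) (Or.inr (EReal.coe_ne_bot c))).2 h2

lemma fstar_lsc (f : ℝ → EReal) : LowerSemicontinuous (fstar f) := by
  apply lowerSemicontinuous_iSup
  intro x
  rcases eq_or_ne (f x) ⊤ with hx | hx
  · have : (fun y : ℝ => (((x * y : ℝ) : EReal) - f x)) = fun _ => (⊥ : EReal) := by
      funext y; rw [hx, EReal.sub_top]
    rw [this]
    exact lowerSemicontinuous_const
  rcases eq_or_ne (f x) ⊥ with hx2 | hx2
  · have : (fun y : ℝ => (((x * y : ℝ) : EReal) - f x)) = fun _ => (⊤ : EReal) := by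
      funext y; rw [hx2, EReal.sub_bot (EReal.coe_ne_bot _)]
    rw [this]
    exact lowerSemicontinuous_const
  · have : (fun y : ℝ => (((x * y : ℝ) : EReal) - f x))
        = fun y : ℝ => (((x * y - (f x).toReal : ℝ) : EReal)) := by
      funext y
      rw [EReal.coe_sub, EReal.coe_toReal hx hx2]
    rw [this]
    exact (continuous_coe_real_ereal.comp (by continuity)).lowerSemicontinuous

lemma fstar_measurable (f : ℝ → EReal) : Measurable (fstar f) :=
  (fstar_lsc f).measurable

end FstarSec

section A1Sec
variable {Ω : Type*} [MeasurableSpace Ω] {P Q : Measure Ω} {a b : EReal} {f : ℝ → EReal}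

lemma ofReal_young {t u v : ℝ} (h : t ≤ u + v) :
    ENNReal.ofReal t + ENNReal.ofReal (-u) + ENNReal.ofReal (-v)
      ≤ ENNReal.ofReal u + ENNReal.ofReal v + ENNReal.ofReal (-t) := by
  have key : ∀ m : ℝ, ENNReal.ofReal m = ENNReal.ofReal (max m 0) := by
    intro m
    rcases le_total m 0 with hm | hm
    · rw [ENNReal.ofReal_eq_zero.2 hm, max_eq_right hm, ENNReal.ofReal_zero]
    · rw [max_eq_left hm]
  rw [key t, key (-u), key (-v), key u, key v, key (-t),
    ← ENNReal.ofReal_add (le_max_right _ _) (le_max_right _ _),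
    ← ENNReal.ofReal_add (add_nonneg (le_max_right _ _) (le_max_right _ _)) (le_max_right _ _),
    ← ENNReal.ofReal_add (le_max_right _ _) (le_max_right _ _),
    ← ENNReal.ofReal_add (add_nonneg (le_max_right _ _) (le_max_right _ _)) (le_max_right _ _)]
  apply ENNReal.ofReal_le_ofReal
  have e1 := max_zero_sub_max_neg_zero_eq_self t
  have e2 := max_zero_sub_max_neg_zero_eq_self u
  have e3 := max_zero_sub_max_neg_zero_eq_self v
  linarith

lemma posE_young {u v : EReal} {t : ℝ} (hu : u ≠ ⊥) (hv : v ≠ ⊥) (ht : (t : EReal) ≤ u + v) :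
    ENNReal.ofReal t + posE (-u) + posE (-v) ≤ posE u + posE v + ENNReal.ofReal (-t) := by
  rcases eq_or_ne u ⊤ with rfl | hut
  · rw [posE_top]
    simp
  rcases eq_or_ne v ⊤ with rfl | hvt
  · rw [posE_top]
    calc _ ≤ (⊤ : ℝ≥0∞) := le_top
      _ ≤ _ := by simp
  have hru : u = ((u.toReal : ℝ) : EReal) := (EReal.coe_toReal hut hu).symm
  have hrv : v = ((v.toReal : ℝ) : EReal) := (EReal.coe_toReal hvt hv).symm
  have htr : t ≤ u.toReal + v.toReal := by
    rw [← EReal.coe_le_coe_iff, EReal.coe_add, ← hru, ← hrv]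
    exact ht
  have p1 : posE (-u) = ENNReal.ofReal (-u.toReal) := by
    conv_lhs => rw [hru, ← EReal.coe_neg]
    exact posE_coe _
  have p2 : posE (-v) = ENNReal.ofReal (-v.toReal) := by
    conv_lhs => rw [hrv, ← EReal.coe_neg]
    exact posE_coe _
  have p3 : posE u = ENNReal.ofReal u.toReal := by
    conv_lhs => rw [hru]
    exact posE_coe _
  have p4 : posE v = ENNReal.ofReal v.toReal := by
    conv_lhs => rw [hrv]
    exact posE_coe _
  rw [p1, p2, p3, p4]
  exact ofReal_young htr

lemma A1 [IsProbabilityMeasure P] [IsProbabilityMeasure Q] (hf : IsF1 a b f)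
    (hQP : Q ≪ P) {g : Ω → ℝ} (hgm : Measurable g) {C : ℝ} (hgb : ∀ x, |g x| ≤ C)
    {y0 c0 : ℝ} (hm0 : ∀ x : ℝ, ((x * y0 - c0 : ℝ) : EReal) ≤ f x) :
    ((∫ x, g x ∂Q : ℝ) : EReal) - eIntegral P (fun x => fstar f (g x))
      ≤ eIntegral P (fun x => f ((Q.rnDeriv P x).toReal)) := by
  set φ : Ω → ℝ := fun x => (Q.rnDeriv P x).toReal with hφ
  have hφm : Measurable φ := (Measure.measurable_rnDeriv Q P).ennreal_toReal
  have hφi : Integrable φ P := Measure.integrable_toReal_rnDeriv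
  have hφ0 : ∀ x, 0 ≤ φ x := fun x => ENNReal.toReal_nonneg
  have hfm : Measurable f := hf.lsc.measurable
  have hEQ : ∫ x, g x ∂Q = ∫ x, φ x * g x ∂P := by
    rw [← integral_rnDeriv_smul hQP]
    rfl
  have hφg : Integrable (fun x => φ x * g x) P := by
    have h0 := hφi.bdd_mul hgm.aestronglyMeasurable (c := C) (ae_of_all _ fun x => by
      rw [Real.norm_eq_abs]; exact hgb x)
    apply h0.congr
    filter_upwards with x
    ring
  set G := ∫⁻ x, ENNReal.ofReal (φ x * g x) ∂P with hG
  set G' := ∫⁻ x, ENNReal.ofReal (-(φ x * g x)) ∂P with hG'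
  set Ap := ∫⁻ x, posE (f (φ x)) ∂P with hAp
  set An := ∫⁻ x, posE (-(f (φ x))) ∂P with hAn
  set Bp := ∫⁻ x, posE (fstar f (g x)) ∂P with hBp
  set Bn := ∫⁻ x, posE (-(fstar f (g x))) ∂P with hBn
  have hfφm : Measurable fun x => f (φ x) := hfm.comp hφm
  have hfsgm : Measurable fun x => fstar f (g x) := (fstar_measurable f).comp hgm
  have m1 : Measurable fun x => ENNReal.ofReal (φ x * g x) := (hφm.mul hgm).ennreal_ofReal
  have m2 : Measurable fun x => posE (-(f (φ x))) := measurable_posE.comp hfφm.neg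
  have m3 : Measurable fun x => posE (f (φ x)) := measurable_posE.comp hfφm
  have m4 : Measurable fun x => posE (fstar f (g x)) := measurable_posE.comp hfsgm
  have hint : G + An + Bn ≤ Ap + Bp + G' := by
    have hpt : ∀ x, ENNReal.ofReal (φ x * g x) + posE (-(f (φ x))) + posE (-(fstar f (g x)))
        ≤ posE (f (φ x)) + posE (fstar f (g x)) + ENNReal.ofReal (-(φ x * g x)) := fun x =>
      posE_young (hf.ne_bot (φ x)) (fstar_ne_bot hf.at_one (g x))
        (young hf.ne_bot hf.at_one (φ x) (g x))
    calc G + An + Bn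
        = ∫⁻ x, (ENNReal.ofReal (φ x * g x) + posE (-(f (φ x)))
            + posE (-(fstar f (g x)))) ∂P := by
          rw [hG, hAn, hBn, ← lintegral_add_left m1, ← lintegral_add_left (m1.fun_add m2)]
      _ ≤ ∫⁻ x, (posE (f (φ x)) + posE (fstar f (g x)) + ENNReal.ofReal (-(φ x * g x))) ∂P :=
          lintegral_mono hpt
      _ = Ap + Bp + G' := by
          rw [hAp, hBp, hG', ← lintegral_add_left m3, ← lintegral_add_left (m3.fun_add m4)]
  have fG : G ≠ ⊤ := (lintegral_ofReal_lt_top hφg).ne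
  have fG' : G' ≠ ⊤ := (lintegral_ofReal_lt_top hφg.neg).ne
  have fAn : An ≠ ⊤ := by
    have hb : ∀ x, posE (-(f (φ x))) ≤ ENNReal.ofReal (c0 + |y0| * φ x) := by
      intro x
      have h1 : ((φ x * y0 - c0 : ℝ) : EReal) ≤ f (φ x) := hm0 (φ x)
      have h2 : -(f (φ x)) ≤ ((c0 - φ x * y0 : ℝ) : EReal) := by
        rw [show ((c0 - φ x * y0 : ℝ) : EReal) = -(((φ x * y0 - c0 : ℝ) : ℝ) : EReal) by
          rw [← EReal.coe_neg]; norm_num]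
        exact EReal.neg_le_neg_iff.2 h1
      calc posE (-(f (φ x))) ≤ posE (((c0 - φ x * y0 : ℝ) : ℝ) : EReal) := posE_mono h2
        _ = ENNReal.ofReal (c0 - φ x * y0) := posE_coe _
        _ ≤ ENNReal.ofReal (c0 + |y0| * φ x) := ENNReal.ofReal_le_ofReal (by
            nlinarith [neg_abs_le y0, abs_nonneg y0, hφ0 x])
    have h5 : An ≤ ∫⁻ x, ENNReal.ofReal (c0 + |y0| * φ x) ∂P := lintegral_mono hb
    have hint2 : Integrable (fun x => c0 + |y0| * φ x) P :=
      (integrable_const c0).add (hφi.const_mul _)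
    exact (h5.trans_lt (lintegral_ofReal_lt_top hint2)).ne
  have fBn : Bn ≠ ⊤ := by
    have hb : ∀ x, posE (-(fstar f (g x))) ≤ ENNReal.ofReal C := by
      intro x
      have h1 : ((g x : ℝ) : EReal) ≤ fstar f (g x) := coe_le_fstar hf.at_one (g x)
      have h2 : -(fstar f (g x)) ≤ ((-(g x) : ℝ) : EReal) := by
        rw [EReal.coe_neg]
        exact EReal.neg_le_neg_iff.2 h1
      calc posE (-(fstar f (g x))) ≤ posE (((-(g x) : ℝ) : ℝ) : EReal) := posE_mono h2
        _ = ENNReal.ofReal (-(g x)) := posE_coe _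
        _ ≤ ENNReal.ofReal C := ENNReal.ofReal_le_ofReal (by
            have h3 := hgb x
            have h4 := neg_abs_le (g x)
            linarith)
    have h4 : Bn ≤ ∫⁻ _, ENNReal.ofReal C ∂P := lintegral_mono hb
    rw [lintegral_const, measure_univ, mul_one] at h4
    exact (h4.trans_lt ENNReal.ofReal_lt_top).ne
  have hIg : ((∫ x, g x ∂Q : ℝ) : EReal) = ((G.toReal - G'.toReal : ℝ) : EReal) := by
    rw [hEQ, integral_eq_lintegral_pos_part_sub_lintegral_neg_part hφg]
  have hEf : eIntegral P (fun x => f ((Q.rnDeriv P x).toReal)) = (Ap : EReal) - (An : EReal) := rfl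
  have hEs : eIntegral P (fun x => fstar f (g x)) = (Bp : EReal) - (Bn : EReal) := rfl
  rw [hEf, hEs, hIg]
  rcases eq_or_ne Bp ⊤ with hBpT | hBpT
  · rw [hBpT, EReal.coe_ennreal_top, ← ereal_coe_toReal_enn fBn, EReal.top_sub_coe, EReal.sub_top]
    exact bot_le
  rcases eq_or_ne Ap ⊤ with hApT | hApT
  · rw [hApT, EReal.coe_ennreal_top, ← ereal_coe_toReal_enn fAn, EReal.top_sub_coe]
    exact le_top
  · have htr : G.toReal + An.toReal + Bn.toReal ≤ Ap.toReal + Bp.toReal + G'.toReal := by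
      have h8 := ENNReal.toReal_mono
        (ENNReal.add_ne_top.2 ⟨ENNReal.add_ne_top.2 ⟨hApT, hBpT⟩, fG'⟩) hint
      rw [ENNReal.toReal_add (ENNReal.add_ne_top.2 ⟨fG, fAn⟩) fBn, ENNReal.toReal_add fG fAn,
        ENNReal.toReal_add (ENNReal.add_ne_top.2 ⟨hApT, hBpT⟩) fG',
        ENNReal.toReal_add hApT hBpT] at h8
      linarith
    rw [← ereal_coe_toReal_enn hBpT, ← ereal_coe_toReal_enn fBn, ← ereal_coe_toReal_enn hApT,
      ← ereal_coe_toReal_enn fAn, ← EReal.coe_sub, ← EReal.coe_sub, ← EReal.coe_sub,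
      EReal.coe_le_coe_iff]
    linarith

end A1Sec

namespace Stmt0Aux

noncomputable def idxF (y c : ℕ → ℝ) (r : ℝ) : ℕ → ℕ
  | 0 => 0
  | (N + 1) => if r * y (idxF y c r N) - c (idxF y c r N) < r * y (N + 1) - c (N + 1)
      then N + 1 else idxF y c r N

noncomputable def valF (y c : ℕ → ℝ) (r : ℝ) (N : ℕ) : ℝ :=
  r * y (idxF y c r N) - c (idxF y c r N)

variable {y c : ℕ → ℝ}

lemma idxF_zero (r : ℝ) : idxF y c r 0 = 0 := by simp only [idxF]

lemma idxF_succ (r : ℝ) (N : ℕ) : idxF y c r (N + 1)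
    = if r * y (idxF y c r N) - c (idxF y c r N) < r * y (N + 1) - c (N + 1)
      then N + 1 else idxF y c r N := by
  simp only [idxF]

lemma valF_succ (r : ℝ) (N : ℕ) :
    valF y c r (N + 1) = max (valF y c r N) (r * y (N + 1) - c (N + 1)) := by
  by_cases h : r * y (idxF y c r N) - c (idxF y c r N) < r * y (N + 1) - c (N + 1)
  · have h1 : idxF y c r (N + 1) = N + 1 := by rw [idxF_succ, if_pos h]
    show r * y (idxF y c r (N + 1)) - c (idxF y c r (N + 1)) = _
    rw [h1, max_eq_right]
    exact h.le
  · have h1 : idxF y c r (N + 1) = idxF y c r N := by rw [idxF_succ, if_neg h]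
    show r * y (idxF y c r (N + 1)) - c (idxF y c r (N + 1)) = _
    rw [h1, max_eq_left (not_lt.1 h : _ ≤ valF y c r N)]
    rfl

lemma valF_mono (r : ℝ) : Monotone (valF y c r) := by
  apply monotone_nat_of_le_succ
  intro N
  rw [valF_succ]
  exact le_max_left _ _

lemma le_valF (r : ℝ) : ∀ N n, n ≤ N → r * y n - c n ≤ valF y c r N := by
  intro N
  induction N with
  | zero =>
      intro n hn
      rw [Nat.le_zero] at hn
      subst hn
      simp only [valF, idxF_zero]
      exact le_rfl
  | succ N ih =>
      intro n hn
      rw [valF_succ]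
      rcases eq_or_lt_of_le hn with rfl | h
      · exact le_max_right _ _
      · exact le_max_of_le_left (ih n (Nat.lt_succ_iff.1 h))

lemma idxF_le (r : ℝ) : ∀ N, idxF y c r N ≤ N := by
  intro N
  induction N with
  | zero => rw [idxF_zero]
  | succ N ih =>
      rw [idxF_succ]
      split
      · exact le_rfl
      · exact ih.trans (Nat.le_succ N)

lemma measurable_idxF_valF : ∀ N, Measurable (fun r => idxF y c r N)
    ∧ Measurable (fun r => valF y c r N) := by
  intro N
  induction N with
  | zero =>
      constructor
      · simp only [idxF_zero]
        exact measurable_const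
      · have h0 : (fun r => valF y c r 0) = fun r => r * y 0 - c 0 := by
          funext r
          simp only [valF, idxF_zero]
        rw [h0]
        exact (measurable_id.mul_const _).sub measurable_const
  | succ N ih =>
      have hcond : MeasurableSet {r : ℝ | valF y c r N < r * y (N + 1) - c (N + 1)} :=
        measurableSet_lt ih.2 ((measurable_id.mul_const _).sub measurable_const)
      have hidx : Measurable (fun r => idxF y c r (N + 1)) := by
        have h0 : (fun r => idxF y c r (N + 1))
            = fun r => if valF y c r N < r * y (N + 1) - c (N + 1) then N + 1
                else idxF y c r N := by
          funext r
          rw [idxF_succ]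
          rfl
        rw [h0]
        exact Measurable.ite hcond measurable_const ih.1
      refine ⟨hidx, ?_⟩
      have h0 : (fun r => valF y c r (N + 1))
          = fun r => max (valF y c r N) (r * y (N + 1) - c (N + 1)) := by
        funext r
        exact valF_succ r N
      rw [h0]
      exact ih.2.max ((measurable_id.mul_const _).sub measurable_const)

lemma valF_abs_le (r : ℝ) (N : ℕ) :
    |valF y c r N| ≤ ((Finset.range (N + 1)).sup' ⟨0, by simp⟩ fun n => |y n|) * |r|
      + (Finset.range (N + 1)).sup' ⟨0, by simp⟩ fun n => |c n| := by
  have hi : idxF y c r N ∈ Finset.range (N + 1) :=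
    Finset.mem_range.2 (Nat.lt_succ_of_le (idxF_le r N))
  have h1 : |y (idxF y c r N)| ≤ _ := Finset.le_sup' (fun n => |y n|) hi
  have h2 : |c (idxF y c r N)| ≤ _ := Finset.le_sup' (fun n => |c n|) hi
  calc |valF y c r N| ≤ |r * y (idxF y c r N)| + |c (idxF y c r N)| := by
        unfold valF
        rw [sub_eq_add_neg]
        exact (abs_add_le _ _).trans (by rw [abs_neg])
    _ ≤ _ := by
        rw [abs_mul, mul_comm]
        have h3 := abs_nonneg r
        nlinarith [h1, h2, abs_nonneg (y (idxF y c r N))]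

end Stmt0Aux


section HardSec
open Stmt0Aux
variable {Ω : Type*} [MeasurableSpace Ω] {P Q : Measure Ω} {a b : EReal} {f : ℝ → EReal}

lemma hard_le [IsProbabilityMeasure P] [IsProbabilityMeasure Q] (hf : IsF1 a b f)
    (hQP : Q ≪ P) :
    eIntegral P (fun x => f ((Q.rnDeriv P x).toReal))
      ≤ ⨆ g ∈ Mb Ω, (((∫ x, g x ∂Q : ℝ) : EReal) - eIntegral P (fun x => fstar f (g x))) := by
  obtain ⟨y, cc, hminor, hsup⟩ := exists_biconj hf
  set φ : Ω → ℝ := fun x => (Q.rnDeriv P x).toReal with hφ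
  have hφm : Measurable φ := (Measure.measurable_rnDeriv Q P).ennreal_toReal
  have hφi : Integrable φ P := Measure.integrable_toReal_rnDeriv
  have hfm : Measurable f := hf.lsc.measurable
  -- the approximating functions
  set g : ℕ → Ω → ℝ := fun N ω => y (idxF y cc (φ ω) N) with hg
  set v : ℕ → Ω → ℝ := fun N ω => cc (idxF y cc (φ ω) N) with hv
  set U : ℕ → Ω → ℝ := fun N ω => valF y cc (φ ω) N with hU
  have hgm : ∀ N, Measurable (g N) := fun N =>
    measurable_from_top.comp ((measurable_idxF_valF (y := y) (c := cc) N).1.comp hφm)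
  have hvm : ∀ N, Measurable (v N) := fun N =>
    measurable_from_top.comp ((measurable_idxF_valF (y := y) (c := cc) N).1.comp hφm)
  have hUm : ∀ N, Measurable (U N) := fun N =>
    ((measurable_idxF_valF (y := y) (c := cc) N).2).comp hφm
  have hgb : ∀ N, ∃ C : ℝ, ∀ ω, |g N ω| ≤ C := by
    intro N
    refine ⟨(Finset.range (N + 1)).sup' ⟨0, by simp⟩ fun n => |y n|, fun ω => ?_⟩
    exact Finset.le_sup' (fun n => |y n|)
      (Finset.mem_range.2 (Nat.lt_succ_of_le (idxF_le (φ ω) N)))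
  have hvb : ∀ N ω, |v N ω| ≤ (Finset.range (N + 1)).sup' ⟨0, by simp⟩ fun n => |cc n| := by
    intro N ω
    exact Finset.le_sup' (fun n => |cc n|)
      (Finset.mem_range.2 (Nat.lt_succ_of_le (idxF_le (φ ω) N)))
  have hvi : ∀ N, Integrable (v N) P := fun N =>
    (integrable_const _).mono' (hvm N).aestronglyMeasurable
      (ae_of_all _ fun ω => by rw [Real.norm_eq_abs]; exact hvb N ω)
  have hUi : ∀ N, Integrable (U N) P := by
    intro N
    set K1 := (Finset.range (N + 1)).sup' ⟨0, by simp⟩ fun n => |y n| with hK1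
    set K2 := (Finset.range (N + 1)).sup' ⟨0, by simp⟩ fun n => |cc n| with hK2
    apply Integrable.mono' ((hφi.abs.const_mul K1).add (integrable_const K2))
      (hUm N).aestronglyMeasurable
    apply ae_of_all
    intro ω
    rw [Real.norm_eq_abs]
    calc |U N ω| ≤ K1 * |φ ω| + K2 := valF_abs_le (φ ω) N
      _ = K1 * |φ ω| + K2 := rfl
  have hφgN : ∀ N, Integrable (fun ω => φ ω * g N ω) P := by
    intro N
    obtain ⟨C, hC⟩ := hgb N
    have h0 := hφi.bdd_mul (hgm N).aestronglyMeasurable (c := C) (ae_of_all _ fun ω => by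
      rw [Real.norm_eq_abs]; exact hC ω)
    apply h0.congr
    filter_upwards with ω
    ring
  -- per-N inequality
  have hstep : ∀ N, ((∫ ω, U N ω ∂P : ℝ) : EReal)
      ≤ ⨆ g' ∈ Mb Ω, (((∫ x, g' x ∂Q : ℝ) : EReal)
          - eIntegral P (fun x => fstar f (g' x))) := by
    intro N
    have hgMb : g N ∈ Mb Ω := ⟨hgm N, hgb N⟩
    apply le_iSup₂_of_le (g N) hgMb
    have hEQ : ∫ ω, g N ω ∂Q = ∫ ω, φ ω * g N ω ∂P := by
      rw [← integral_rnDeriv_smul hQP]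
      rfl
    have hfsle : eIntegral P (fun x => fstar f (g N x))
        ≤ ((∫ ω, v N ω ∂P : ℝ) : EReal) := by
      rw [← eIntegral_real (hvi N)]
      apply eIntegral_mono_ae
      apply ae_of_all
      intro ω
      exact fstar_le_of_minor hf.ne_bot (hminor (idxF y cc (φ ω) N))
    have hUeq : ∫ ω, U N ω ∂P = ∫ ω, g N ω ∂Q - ∫ ω, v N ω ∂P := by
      rw [hEQ, ← integral_sub (hφgN N) (hvi N)]
      apply integral_congr_ae
      filter_upwards with ω
      rfl
    calc ((∫ ω, U N ω ∂P : ℝ) : EReal)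
        = ((∫ ω, g N ω ∂Q : ℝ) : EReal) - ((∫ ω, v N ω ∂P : ℝ) : EReal) := by
          rw [hUeq, EReal.coe_sub]
      _ ≤ ((∫ ω, g N ω ∂Q : ℝ) : EReal) - eIntegral P (fun x => fstar f (g N x)) :=
          EReal.sub_le_sub le_rfl hfsle
  -- monotone convergence
  have hkey : (⨆ N, ((∫ ω, U N ω ∂P : ℝ) : EReal))
      = eIntegral P (fun x => f (φ x)) := by
    apply iSup_integral_eq_eIntegral (hfm.comp hφm) hUm hUi
    · intro N ω
      exact valF_mono (φ ω) (Nat.le_succ N)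
    · intro ω
      show (⨆ N, ((U N ω : ℝ) : EReal)) = f (φ ω)
      apply le_antisymm
      · apply iSup_le
        intro N
        exact hminor (idxF y cc (φ ω) N) (φ ω)
      · rw [← hsup (φ ω)]
        apply iSup_le
        intro n
        calc (((φ ω) * y n - cc n : ℝ) : EReal) ≤ ((valF y cc (φ ω) n : ℝ) : EReal) := by
              exact_mod_cast le_valF (φ ω) n n le_rfl
          _ ≤ _ := le_iSup (fun N => ((valF y cc (φ ω) N : ℝ) : EReal)) n
  rw [show (fun x => f ((Q.rnDeriv P x).toReal)) = fun x => f (φ x) from rfl, ← hkey]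
  exact iSup_le hstep

end HardSec

section FinalSec
open Stmt0Aux
variable {Ω : Type*} [MeasurableSpace Ω] {P Q : Measure Ω} {a b : EReal} {f : ℝ → EReal}

lemma sup_eq_top_of_not_ac [IsProbabilityMeasure P] [IsProbabilityMeasure Q]
    (hf : IsF1 a b f) (hQP : ¬ Q ≪ P) :
    (⨆ g ∈ Mb Ω, (((∫ x, g x ∂Q : ℝ) : EReal)
      - eIntegral P (fun x => fstar f (g x)))) = ⊤ := by
  obtain ⟨y, cc, hminor, -⟩ := exists_biconj hf
  set y0 := y 0 with hy0
  have hklt : fstar f y0 ≤ (cc 0 : EReal) := fstar_le_of_minor hf.ne_bot (hminor 0)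
  have hkt : fstar f y0 ≠ ⊤ := fun h => (EReal.coe_ne_top (cc 0)) (top_le_iff.1 (h ▸ hklt))
  have hkb : fstar f y0 ≠ ⊥ := fstar_ne_bot hf.at_one y0
  set κ := (fstar f y0).toReal with hκ
  have hκeq : fstar f y0 = (κ : EReal) := (EReal.coe_toReal hkt hkb).symm
  have hex : ∃ s, MeasurableSet s ∧ P s = 0 ∧ Q s ≠ 0 := by
    by_contra hcon
    push_neg at hcon
    exact hQP (Measure.AbsolutelyContinuous.mk fun s hs h0 => hcon s hs h0)
  obtain ⟨s, hsm, hPs, hQs⟩ := hex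
  set qs := (Q s).toReal with hqsdef
  have hqs : 0 < qs := ENNReal.toReal_pos hQs (measure_ne_top Q s)
  apply ereal_eq_top_of_forall_coe_le
  intro r
  obtain ⟨n, hn⟩ := exists_nat_ge ((r + κ - y0) / qs)
  set gn : Ω → ℝ := fun ω => y0 + Set.indicator s (fun _ => (n : ℝ)) ω with hgn
  have hgm : Measurable gn := measurable_const.add (measurable_const.indicator hsm)
  have hgb : ∀ ω, |gn ω| ≤ |y0| + n := by
    intro ω
    by_cases hω : ω ∈ s
    · rw [hgn]
      simp only [Set.indicator_of_mem hω]
      exact (abs_add_le _ _).trans (by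
        have : |(n:ℝ)| = (n:ℝ) := abs_of_nonneg (Nat.cast_nonneg n)
        rw [this])
    · rw [hgn]
      simp only [Set.indicator_of_notMem hω, add_zero]
      have : (0:ℝ) ≤ n := Nat.cast_nonneg n
      linarith
  have hgMb : gn ∈ Mb Ω := ⟨hgm, ⟨|y0| + n, hgb⟩⟩
  have hIQ : ∫ ω, gn ω ∂Q = y0 + qs * n := by
    rw [hgn, integral_add (integrable_const y0) ((integrable_const (n:ℝ)).indicator hsm),
      integral_const, integral_indicator_const _ hsm]
    simp [measure_univ, smul_eq_mul, measureReal_def]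
    exact Or.inl rfl
  have hae : (fun ω => fstar f (gn ω)) =ᵐ[P] (fun _ => ((κ : ℝ) : EReal)) := by
    have hsc : sᶜ ∈ ae P := compl_mem_ae_iff.2 hPs
    filter_upwards [hsc] with ω hω
    have h2 : gn ω = y0 := by
      rw [hgn]
      simp [Set.indicator_of_notMem hω]
    rw [h2, hκeq]
  have hE : eIntegral P (fun ω => fstar f (gn ω)) = (κ : EReal) := by
    rw [eIntegral_congr_ae hae, eIntegral_const_real]
  have hterm : ((r : ℝ) : EReal)
      ≤ ((∫ ω, gn ω ∂Q : ℝ) : EReal) - eIntegral P (fun x => fstar f (gn x)) := by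
    rw [hE, hIQ, show ((y0 + qs * n : ℝ) : EReal) - ((κ : ℝ) : EReal)
        = ((y0 + qs * n - κ : ℝ) : EReal) from (EReal.coe_sub _ _).symm,
      EReal.coe_le_coe_iff]
    rw [div_le_iff₀ hqs] at hn
    linarith
  exact hterm.trans (le_iSup₂_of_le gn hgMb le_rfl)

lemma lambda_le_eIntegral (f : ℝ → EReal) (P : Measure Ω) (g : Ω → ℝ) :
    LambdaF f P g ≤ eIntegral P (fun x => fstar f (g x)) := by
  have h := iInf_le (fun ν : ℝ => ((ν : EReal) + eIntegral P (fun x => fstar f (g x - ν)))) 0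
  simp at h
  exact h

theorem stmt0' {Ω : Type*} [MeasurableSpace Ω] (a b : EReal) (f : ℝ → EReal)
    (hf : IsF1 a b f) (Q P : Measure Ω) [IsProbabilityMeasure Q] [IsProbabilityMeasure P] :
    fDivE f Q P
      = ⨆ g ∈ Mb Ω, (((∫ x, g x ∂Q : ℝ) : EReal) - eIntegral P (fun x => fstar f (g x)))
    ∧ fDivE f Q P
      = ⨆ g ∈ Mb Ω, (((∫ x, g x ∂Q : ℝ) : EReal) - LambdaF f P g) := by
  obtain ⟨y, cc, hminor, -⟩ := exists_biconj hf
  have hsup1 : fDivE f Q P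
      = ⨆ g ∈ Mb Ω, (((∫ x, g x ∂Q : ℝ) : EReal)
          - eIntegral P (fun x => fstar f (g x))) := by
    by_cases hQP : Q ≪ P
    · rw [fDivE, if_pos hQP]
      apply le_antisymm
      · exact hard_le hf hQP
      · apply iSup₂_le
        intro g hg
        obtain ⟨hgm, C, hgb⟩ := hg
        exact A1 hf hQP hgm hgb (hminor 0)
    · rw [fDivE, if_neg hQP]
      exact (sup_eq_top_of_not_ac hf hQP).symm
  refine ⟨hsup1, ?_⟩
  apply le_antisymm
  · rw [hsup1]
    apply iSup₂_mono
    intro g hg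
    exact EReal.sub_le_sub le_rfl (lambda_le_eIntegral f P g)
  · apply iSup₂_le
    intro g hg
    obtain ⟨hgm, C, hgb⟩ := hg
    by_cases hQP : Q ≪ P
    · rw [fDivE, if_pos hQP]
      rw [LambdaF, ereal_coe_sub_iInf]
      apply iSup_le
      intro ν
      rw [ereal_real_sub_add]
      have hgν : Measurable (fun x => g x - ν) := hgm.sub measurable_const
      have hgbν : ∀ x, |g x - ν| ≤ C + |ν| := fun x => by
        rw [sub_eq_add_neg]
        refine (abs_add_le _ _).trans ?_
        rw [abs_neg]
        have := hgb x
        linarith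
      have hgiQ : Integrable g Q :=
        (integrable_const C).mono' hgm.aestronglyMeasurable
          (ae_of_all _ fun x => by rw [Real.norm_eq_abs]; exact hgb x)
      have hIsub : ∫ x, (g x - ν) ∂Q = ∫ x, g x ∂Q - ν := by
        rw [integral_sub hgiQ (integrable_const ν), integral_const]
        simp [measure_univ]
      have h2 := A1 hf hQP hgν hgbν (hminor 0)
      rw [hIsub] at h2
      exact h2
    · rw [fDivE, if_neg hQP]
      exact le_top

end FinalSec

/-- Variational formulas for the classical `f`-divergence:
`D_f(Q‖P) = sup_{g ∈ M_b(Ω)} {E_Q[g] - E_P[f*(g)]} = sup_{g ∈ M_b(Ω)} {E_Q[g] - Λ_f^P[g]}`. -/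
theorem stmt0 {Ω : Type*} [MeasurableSpace Ω] (a b : EReal) (f : ℝ → EReal)
    (hf : IsF1 a b f) (Q P : Measure Ω) [IsProbabilityMeasure Q] [IsProbabilityMeasure P] :
    fDivE f Q P
      = ⨆ g ∈ Mb Ω, (((∫ x, g x ∂Q : ℝ) : EReal) - eIntegral P (fun x => fstar f (g x)))
    ∧ fDivE f Q P
      = ⨆ g ∈ Mb Ω, (((∫ x, g x ∂Q : ℝ) : EReal) - LambdaF f P g) := by
  exact stmt0' a b f hf Q P
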